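/- arXiv:1311.0656 — 8 statements merged into one kernel-verified Lean document; each statement's English description precedes it below -/
import Mathlib

section
/- When the joint and marginal estimators are computed with the same number of replications R, the difference of their variances equals Var(Î_J) − Var(Î_M) = (1/R) Σ_{k=2}^N (1 − R^{−(k−1)}) Σ_{C ⊆ {1,…,N}, |C| = k} [ ∏_{i ∈ C} Vᵢ · ∏_{j ∉ C} Eⱼ² ], and in particular Var(Î_J) ≥ Var(Î_M). -/
open MeasureTheory ProbabilityTheory Finset

section Aux

variable {Ω : Type*} [MeasurableSpace Ω] {μ : Measure Ω} [IsProbabilityMeasure μ]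

/-- Product of independent integrable random variables over a finset is integrable and its
integral factorizes. -/
private lemma aux_indep_prod {ι : Type*} {f : ι → Ω → ℝ}
    (hind : iIndepFun (m := fun _ => Real.measurableSpace) f μ)
    (hmeas : ∀ i, Measurable (f i)) (hint : ∀ i, Integrable (f i) μ) (s : Finset ι) :
    Integrable (fun ω => ∏ i ∈ s, f i ω) μ ∧
      ∫ ω, ∏ i ∈ s, f i ω ∂μ = ∏ i ∈ s, ∫ ω, f i ω ∂μ := by
  classical
  induction s using Finset.induction_on with
  | empty => simp
  | @insert a s ha ih =>
    have hps : IndepFun (∏ j ∈ s, f j) (f a) μ :=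
      hind.indepFun_finsetProd_of_notMem hmeas ha
    have hprodfn : (∏ j ∈ s, f j) = fun ω => ∏ j ∈ s, f j ω := by
      funext ω; simp [Finset.prod_apply]
    have h1 : Integrable ((∏ j ∈ s, f j) * f a) μ := by
      refine hps.integrable_mul ?_ (hint a)
      rw [hprodfn]; exact ih.1
    constructor
    · have : (fun ω => ∏ i ∈ insert a s, f i ω) = (∏ j ∈ s, f j) * f a := by
        funext ω; simp [Finset.prod_insert ha, Finset.prod_apply, mul_comm]
      rw [this]; exact h1
    · have h2 := hps.integral_mul_eq_mul_integral (by rw [hprodfn]; exact ih.1.aestronglyMeasurable)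
        (hint a).aestronglyMeasurable
      have h3 : (fun ω => ∏ i ∈ insert a s, f i ω) = (∏ j ∈ s, f j) * f a := by
        funext ω; simp [Finset.prod_insert ha, Finset.prod_apply, mul_comm]
      rw [h3, h2, hprodfn, ih.2, Finset.prod_insert ha, mul_comm]

end Aux

/-- The purely algebraic identity behind the variance difference formula. -/
private lemma aux_alg {N R : ℕ} (hN : 1 ≤ N) (hR : 1 ≤ R) (v b : Fin N → ℝ) :
    (R : ℝ)⁻¹ * (∏ i, (v i + b i) - ∏ i, b i)
      - (∏ i, ((R : ℝ)⁻¹ * v i + b i) - ∏ i, b i)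
    = (R : ℝ)⁻¹ * ∑ k ∈ Finset.Icc 2 N, (1 - ((R : ℝ) ^ (k - 1))⁻¹) *
        ∑ C ∈ Finset.univ.powerset.filter (fun C : Finset (Fin N) => C.card = k),
          (∏ i ∈ C, v i) * ∏ j ∈ Cᶜ, b j := by
  classical
  have hRne : (R : ℝ) ≠ 0 := by positivity
  set W : ℕ → ℝ := fun k => ∑ t ∈ Finset.powersetCard k (univ : Finset (Fin N)),
      (∏ i ∈ t, v i) * ∏ j ∈ univ \ t, b j with hW
  have hfilter : ∀ k, ∑ C ∈ Finset.univ.powerset.filter (fun C : Finset (Fin N) => C.card = k),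
      (∏ i ∈ C, v i) * ∏ j ∈ Cᶜ, b j = W k := by
    intro k
    rw [hW, ← Finset.powersetCard_eq_filter]
    refine Finset.sum_congr rfl fun t _ => ?_
    rw [Finset.compl_eq_univ_sdiff]
  simp_rw [hfilter]
  have hexp1 : ∏ i, (v i + b i) = ∑ k ∈ Finset.range (N + 1), W k := by
    rw [Finset.prod_add, Finset.sum_powerset]
    simp only [Finset.card_univ, Fintype.card_fin]
    rfl
  have hexp2 : ∏ i, ((R : ℝ)⁻¹ * v i + b i)
      = ∑ k ∈ Finset.range (N + 1), ((R : ℝ)⁻¹) ^ k * W k := by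
    rw [Finset.prod_add, Finset.sum_powerset]
    simp only [Finset.card_univ, Fintype.card_fin]
    refine Finset.sum_congr rfl fun k _ => ?_
    rw [hW, Finset.mul_sum]
    refine Finset.sum_congr rfl fun t ht => ?_
    have hcard : t.card = k := (Finset.mem_powersetCard.mp ht).2
    rw [Finset.prod_mul_distrib, Finset.prod_const, hcard, mul_assoc]
  have hb : ∏ i, b i = W 0 := by
    simp [hW, Finset.powersetCard_zero]
  have hset : Finset.range (N + 1) = insert 0 (insert 1 (Finset.Icc 2 N)) := by
    ext k
    simp only [Finset.mem_range, Finset.mem_insert, Finset.mem_Icc]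
    omega
  have h0 : (0 : ℕ) ∉ insert 1 (Finset.Icc 2 N) := by simp
  have h1 : (1 : ℕ) ∉ Finset.Icc 2 N := by simp
  rw [hexp1, hexp2, hb, hset, Finset.sum_insert h0, Finset.sum_insert h1,
    Finset.sum_insert h0, Finset.sum_insert h1]
  have hkey : (R : ℝ)⁻¹ * ∑ k ∈ Finset.Icc 2 N, (1 - ((R : ℝ) ^ (k - 1))⁻¹) * W k
      = (R : ℝ)⁻¹ * (∑ k ∈ Finset.Icc 2 N, W k)
        - ∑ k ∈ Finset.Icc 2 N, ((R : ℝ)⁻¹) ^ k * W k := by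
    rw [Finset.mul_sum, Finset.mul_sum, ← Finset.sum_sub_distrib]
    refine Finset.sum_congr rfl fun k hk => ?_
    have h2 : 2 ≤ k := (Finset.mem_Icc.mp hk).1
    have hk1 : k - 1 + 1 = k := by omega
    have hpow : ((R : ℝ)⁻¹) ^ k = ((R : ℝ) ^ (k - 1))⁻¹ * (R : ℝ)⁻¹ := by
      rw [← inv_pow, ← pow_succ, hk1]
    rw [hpow]
    ring
  rw [hkey]
  ring

theorem variance_difference_joint_marginal
    {Ω : Type*} [MeasurableSpace Ω] (μ : Measure Ω) [IsProbabilityMeasure μ]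
    (N R : ℕ) (hN : 1 ≤ N) (hR : 1 ≤ R)
    (X : Fin N → Ω → ℝ)
    (hXmeas : ∀ i, Measurable (X i))
    (hXL2 : ∀ i, MemLp (X i) 2 μ)
    (hXindep : iIndepFun (m := fun _ => Real.measurableSpace) X μ)
    (Y : Fin N → Fin R → Ω → ℝ)
    (hYmeas : ∀ i r, Measurable (Y i r))
    (hYindep : iIndepFun (m := fun _ => Real.measurableSpace)
      (fun p : Fin N × Fin R => Y p.1 p.2) μ)
    (hYdist : ∀ i r, IdentDistrib (Y i r) (X i) μ μ) :
    variance (fun ω => (R : ℝ)⁻¹ * ∑ r, ∏ i, Y i r ω) μ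
      - variance (fun ω => ∏ i, ((R : ℝ)⁻¹ * ∑ r, Y i r ω)) μ
      = (R : ℝ)⁻¹ * ∑ k ∈ Finset.Icc 2 N, (1 - ((R : ℝ) ^ (k - 1))⁻¹) *
          ∑ C ∈ Finset.univ.powerset.filter (fun C : Finset (Fin N) => C.card = k),
            (∏ i ∈ C, variance (X i) μ) * ∏ j ∈ Cᶜ, (∫ ω, X j ω ∂μ) ^ 2
    ∧ variance (fun ω => ∏ i, ((R : ℝ)⁻¹ * ∑ r, Y i r ω)) μ
        ≤ variance (fun ω => (R : ℝ)⁻¹ * ∑ r, ∏ i, Y i r ω) μ := by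
  classical
  have hRne : (R : ℝ) ≠ 0 := by
    have : (0 : ℝ) < R := by exact_mod_cast hR
    exact ne_of_gt this
  -- abbreviations
  set E : Fin N → ℝ := fun i => ∫ ω, X i ω ∂μ with hE
  set V : Fin N → ℝ := fun i => variance (X i) μ with hV
  -- basic facts about the Y's
  have hYL2 : ∀ i r, MemLp (Y i r) 2 μ := fun i r => (hYdist i r).symm.memLp_snd (hXL2 i)
  have hYint : ∀ i r, Integrable (Y i r) μ := fun i r => (hYL2 i r).integrable one_le_two
  have hYsqint : ∀ i r, Integrable (fun ω => Y i r ω ^ 2) μ := fun i r =>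
    (hYL2 i r).integrable_sq
  have hEY : ∀ i r, ∫ ω, Y i r ω ∂μ = E i := fun i r => (hYdist i r).integral_eq
  have hM2X : ∀ i, ∫ ω, X i ω ^ 2 ∂μ = V i + E i ^ 2 := by
    intro i
    have h := variance_eq_sub (hXL2 i)
    simp only [Pi.pow_apply] at h
    have hVi : V i = variance (X i) μ := rfl
    have hEi : E i = ∫ ω, X i ω ∂μ := rfl
    rw [hVi, hEi, h]
    ring
  have hEYsq : ∀ i r, ∫ ω, Y i r ω ^ 2 ∂μ = V i + E i ^ 2 := by
    intro i r
    have h2 : IdentDistrib (fun ω => Y i r ω ^ 2) (fun ω => X i ω ^ 2) μ μ :=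
      (hYdist i r).comp (measurable_id.pow_const 2)
    rw [h2.integral_eq]
    exact hM2X i
  -- master factorization lemma for products of powers of the Y's
  have master : ∀ e : Fin N × Fin R → ℕ, (∀ p, e p ≤ 2) →
      Integrable (fun ω => ∏ p : Fin N × Fin R, Y p.1 p.2 ω ^ e p) μ ∧
        ∫ ω, ∏ p : Fin N × Fin R, Y p.1 p.2 ω ^ e p ∂μ
          = ∏ p : Fin N × Fin R, ∫ ω, Y p.1 p.2 ω ^ e p ∂μ := by
    intro e he
    have hind' : iIndepFun (m := fun _ => Real.measurableSpace)
        (fun p (ω : Ω) => Y p.1 p.2 ω ^ e p) μ :=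
      hYindep.comp (fun p (x : ℝ) => x ^ e p) fun p => measurable_id.pow_const _
    have hmeas' : ∀ p : Fin N × Fin R, Measurable fun ω => Y p.1 p.2 ω ^ e p :=
      fun p => (hYmeas p.1 p.2).pow_const _
    have hint' : ∀ p : Fin N × Fin R, Integrable (fun ω => Y p.1 p.2 ω ^ e p) μ := by
      intro p
      obtain h | h | h : e p = 0 ∨ e p = 1 ∨ e p = 2 := by have := he p; omega
      · simp only [h, pow_zero]; exact integrable_const 1
      · simpa only [h, pow_one] using hYint p.1 p.2
      · simpa only [h] using hYsqint p.1 p.2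
    exact aux_indep_prod hind' hmeas' hint' Finset.univ
  -- pointwise conversion lemmas
  have conv1 : ∀ (e : Fin N × Fin R → ℕ) (g : Fin N → Fin R) (k : ℕ),
      (∀ p, e p = if p.2 = g p.1 then k else 0) → ∀ ω : Ω,
      ∏ p : Fin N × Fin R, Y p.1 p.2 ω ^ e p = ∏ i, Y i (g i) ω ^ k := by
    intro e g k hdesc ω
    rw [Fintype.prod_prod_type]
    refine Finset.prod_congr rfl fun i _ => ?_
    calc ∏ r, Y i r ω ^ e (i, r)
        = ∏ r, (if r = g i then Y i r ω ^ k else 1) := by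
          refine Finset.prod_congr rfl fun r _ => ?_
          rw [hdesc (i, r)]
          split_ifs <;> simp
      _ = Y i (g i) ω ^ k := by rw [Finset.prod_ite_eq']; simp
  have conv2 : ∀ (e : Fin N × Fin R → ℕ) (h : Fin N → Fin R × Fin R),
      (∀ p, e p = (if p.2 = (h p.1).1 then 1 else 0) + (if p.2 = (h p.1).2 then 1 else 0)) →
      ∀ ω : Ω, ∏ p : Fin N × Fin R, Y p.1 p.2 ω ^ e p
        = ∏ i, (Y i (h i).1 ω * Y i (h i).2 ω) := by
    intro e h hdesc ω
    rw [Fintype.prod_prod_type]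
    refine Finset.prod_congr rfl fun i _ => ?_
    calc ∏ r, Y i r ω ^ e (i, r)
        = ∏ r, ((if r = (h i).1 then Y i r ω else 1) * (if r = (h i).2 then Y i r ω else 1)) := by
          refine Finset.prod_congr rfl fun r _ => ?_
          rw [hdesc (i, r), pow_add]
          congr 1 <;> (split_ifs <;> simp)
      _ = Y i (h i).1 ω * Y i (h i).2 ω := by
          rw [Finset.prod_mul_distrib, Finset.prod_ite_eq', Finset.prod_ite_eq']; simp
  -- integral-side conversion lemmas
  have intconv1 : ∀ (e : Fin N × Fin R → ℕ) (g : Fin N → Fin R),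
      (∀ p, e p = if p.2 = g p.1 then 1 else 0) →
      ∏ p : Fin N × Fin R, (∫ ω, Y p.1 p.2 ω ^ e p ∂μ) = ∏ i, E i := by
    intro e g hdesc
    rw [Fintype.prod_prod_type]
    refine Finset.prod_congr rfl fun i _ => ?_
    calc ∏ r, (∫ ω, Y i r ω ^ e (i, r) ∂μ)
        = ∏ r, (if r = g i then E i else 1) := by
          refine Finset.prod_congr rfl fun r _ => ?_
          rw [hdesc (i, r)]
          split_ifs with hr
          · simpa using hEY i r
          · simp
      _ = E i := by rw [Finset.prod_ite_eq']; simp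
  have intconv2 : ∀ (e : Fin N × Fin R → ℕ) (h : Fin N → Fin R × Fin R),
      (∀ p, e p = (if p.2 = (h p.1).1 then 1 else 0) + (if p.2 = (h p.1).2 then 1 else 0)) →
      ∏ p : Fin N × Fin R, (∫ ω, Y p.1 p.2 ω ^ e p ∂μ)
        = ∏ i, (if (h i).1 = (h i).2 then V i + E i ^ 2 else E i ^ 2) := by
    intro e h hdesc
    rw [Fintype.prod_prod_type]
    refine Finset.prod_congr rfl fun i _ => ?_
    rcases eq_or_ne (h i).1 (h i).2 with hd | hd
    · rw [if_pos hd]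
      calc ∏ r, (∫ ω, Y i r ω ^ e (i, r) ∂μ)
          = ∏ r, (if r = (h i).1 then V i + E i ^ 2 else 1) := by
            refine Finset.prod_congr rfl fun r _ => ?_
            rw [hdesc (i, r), ← hd]
            split_ifs with hr
            · norm_num
              simpa using hEYsq i r
            · simp
        _ = V i + E i ^ 2 := by rw [Finset.prod_ite_eq']; simp
    · rw [if_neg hd]
      calc ∏ r, (∫ ω, Y i r ω ^ e (i, r) ∂μ)
          = ∏ r, ((if r = (h i).1 then E i else 1) * (if r = (h i).2 then E i else 1)) := by
            refine Finset.prod_congr rfl fun r _ => ?_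
            rw [hdesc (i, r)]
            split_ifs with h1 h2 h2
            · exact absurd (h1 ▸ h2 ▸ rfl : (h i).1 = (h i).2) hd
            · norm_num
              simpa using hEY i r
            · norm_num
              simpa using hEY i r
            · simp
        _ = E i * E i := by
            rw [Finset.prod_mul_distrib, Finset.prod_ite_eq', Finset.prod_ite_eq']; simp
        _ = E i ^ 2 := by ring
  -- single-index product terms
  have hterm1 : ∀ g : Fin N → Fin R,
      Integrable (fun ω => ∏ i, Y i (g i) ω) μ ∧
        ∫ ω, ∏ i, Y i (g i) ω ∂μ = ∏ i, E i := by
    intro g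
    obtain ⟨hi, hev⟩ := master (fun p => if p.2 = g p.1 then 1 else 0)
      (by intro p; split_ifs <;> omega)
    have hc : ∀ ω : Ω, ∏ p : Fin N × Fin R,
        Y p.1 p.2 ω ^ (if p.2 = g p.1 then 1 else 0) = ∏ i, Y i (g i) ω := by
      intro ω
      rw [conv1 (fun p => if p.2 = g p.1 then 1 else 0) g 1 (fun p => rfl) ω]
      simp
    constructor
    · exact hi.congr (Filter.Eventually.of_forall hc)
    · have h2 : ∫ ω, ∏ i, Y i (g i) ω ∂μ
          = ∫ ω, ∏ p : Fin N × Fin R, Y p.1 p.2 ω ^ (if p.2 = g p.1 then 1 else 0) ∂μ :=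
        integral_congr_ae (Filter.Eventually.of_forall fun ω => (hc ω).symm)
      rw [h2, hev, intconv1 (fun p => if p.2 = g p.1 then 1 else 0) g (fun p => rfl)]
  -- pair-index product terms
  have hterm2 : ∀ h : Fin N → Fin R × Fin R,
      Integrable (fun ω => ∏ i, (Y i (h i).1 ω * Y i (h i).2 ω)) μ ∧
        ∫ ω, ∏ i, (Y i (h i).1 ω * Y i (h i).2 ω) ∂μ
          = ∏ i, (if (h i).1 = (h i).2 then V i + E i ^ 2 else E i ^ 2) := by
    intro h
    obtain ⟨hi, hev⟩ := master
      (fun p => (if p.2 = (h p.1).1 then 1 else 0) + (if p.2 = (h p.1).2 then 1 else 0))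
      (by intro p; split_ifs <;> omega)
    have hc : ∀ ω : Ω, ∏ p : Fin N × Fin R,
        Y p.1 p.2 ω ^ ((if p.2 = (h p.1).1 then 1 else 0) + (if p.2 = (h p.1).2 then 1 else 0))
          = ∏ i, (Y i (h i).1 ω * Y i (h i).2 ω) :=
      conv2 _ h (fun p => rfl)
    constructor
    · exact hi.congr (Filter.Eventually.of_forall hc)
    · have h2 : ∫ ω, ∏ i, (Y i (h i).1 ω * Y i (h i).2 ω) ∂μ
          = ∫ ω, ∏ p : Fin N × Fin R, Y p.1 p.2 ω ^
            ((if p.2 = (h p.1).1 then 1 else 0) + (if p.2 = (h p.1).2 then 1 else 0)) ∂μ :=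
        integral_congr_ae (Filter.Eventually.of_forall fun ω => (hc ω).symm)
      rw [h2, hev, intconv2 _ h (fun p => rfl)]
  ----------------------------------------------------------------
  -- Marginal estimator
  ----------------------------------------------------------------
  have hprodS : ∀ ω : Ω, ∏ i, ((R : ℝ)⁻¹ * ∑ r, Y i r ω)
      = ((R : ℝ)⁻¹) ^ N * ∑ g : Fin N → Fin R, ∏ i, Y i (g i) ω := by
    intro ω
    rw [Finset.prod_mul_distrib, Finset.prod_const, Finset.card_univ, Fintype.card_fin,
      Fintype.prod_sum]
  have hES : ∫ ω, ∏ i, ((R : ℝ)⁻¹ * ∑ r, Y i r ω) ∂μ = ∏ i, E i := by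
    simp only [hprodS]
    rw [integral_const_mul, integral_finset_sum _ fun g _ => (hterm1 g).1]
    have hsc : ∑ g ∈ (Finset.univ : Finset (Fin N → Fin R)), ∫ ω, ∏ i, Y i (g i) ω ∂μ
        = ∑ g ∈ (Finset.univ : Finset (Fin N → Fin R)), ∏ i, E i :=
      Finset.sum_congr rfl fun g _ => (hterm1 g).2
    rw [hsc, Finset.sum_const, Finset.card_univ, Fintype.card_fun, Fintype.card_fin,
      Fintype.card_fin, nsmul_eq_mul]
    push_cast
    rw [← mul_assoc, ← mul_pow]
    simp [inv_mul_cancel₀ hRne]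
  have hSsq : ∀ (i : Fin N) (ω : Ω), ((R : ℝ)⁻¹ * ∑ r, Y i r ω) ^ 2
      = ((R : ℝ)⁻¹) ^ 2 * ∑ q : Fin R × Fin R, Y i q.1 ω * Y i q.2 ω := by
    intro i ω
    rw [mul_pow]
    congr 1
    rw [sq, Finset.sum_mul_sum, Fintype.sum_prod_type]
  have hprodSsq : ∀ ω : Ω, (∏ i, ((R : ℝ)⁻¹ * ∑ r, Y i r ω)) ^ 2
      = (((R : ℝ)⁻¹) ^ 2) ^ N *
          ∑ h : Fin N → Fin R × Fin R, ∏ i, (Y i (h i).1 ω * Y i (h i).2 ω) := by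
    intro ω
    rw [← Finset.prod_pow]
    simp only [hSsq]
    rw [Finset.prod_mul_distrib, Finset.prod_const, Finset.card_univ, Fintype.card_fin,
      Fintype.prod_sum]
  have hsum2 : ∑ h : Fin N → Fin R × Fin R,
      ∏ i, (if (h i).1 = (h i).2 then V i + E i ^ 2 else E i ^ 2)
      = ∏ i, ((R : ℝ) * (V i + E i ^ 2) + ((R : ℝ) ^ 2 - (R : ℝ)) * E i ^ 2) := by
    have hone : ∀ i : Fin N, ∑ q : Fin R × Fin R,
        (if q.1 = q.2 then V i + E i ^ 2 else E i ^ 2)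
        = (R : ℝ) * (V i + E i ^ 2) + ((R : ℝ) ^ 2 - (R : ℝ)) * E i ^ 2 := by
      intro i
      rw [Fintype.sum_prod_type]
      have hin : ∀ a : Fin R, ∑ b : Fin R, (if a = b then V i + E i ^ 2 else E i ^ 2)
          = (V i + E i ^ 2) + ((R : ℝ) - 1) * E i ^ 2 := by
        intro a
        have hsplit : ∀ b : Fin R, (if a = b then V i + E i ^ 2 else E i ^ 2)
            = E i ^ 2 + (if a = b then V i + E i ^ 2 - E i ^ 2 else 0) := by
          intro b; split_ifs <;> ring
        simp only [hsplit]
        rw [Finset.sum_add_distrib, Finset.sum_const, Finset.sum_ite_eq, Finset.card_univ,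
          Fintype.card_fin]
        simp only [Finset.mem_univ, if_true, nsmul_eq_mul]
        ring
      simp only [hin]
      rw [Finset.sum_const, Finset.card_univ, Fintype.card_fin, nsmul_eq_mul]
      ring
    have hps := Fintype.prod_sum
      (fun (i : Fin N) (q : Fin R × Fin R) => if q.1 = q.2 then V i + E i ^ 2 else E i ^ 2)
    rw [← hps]
    exact Finset.prod_congr rfl fun i _ => hone i
  have hESsq : ∫ ω, (∏ i, ((R : ℝ)⁻¹ * ∑ r, Y i r ω)) ^ 2 ∂μ
      = ∏ i, ((R : ℝ)⁻¹ * V i + E i ^ 2) := by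
    simp only [hprodSsq]
    rw [integral_const_mul, integral_finset_sum _ fun h _ => (hterm2 h).1]
    have hsc : ∑ h ∈ (Finset.univ : Finset (Fin N → Fin R × Fin R)),
        ∫ ω, ∏ i, (Y i (h i).1 ω * Y i (h i).2 ω) ∂μ
        = ∑ h ∈ (Finset.univ : Finset (Fin N → Fin R × Fin R)),
          ∏ i, (if (h i).1 = (h i).2 then V i + E i ^ 2 else E i ^ 2) :=
      Finset.sum_congr rfl fun h _ => (hterm2 h).2
    rw [hsc, hsum2]
    have : (((R : ℝ)⁻¹) ^ 2) ^ N *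
        ∏ i, ((R : ℝ) * (V i + E i ^ 2) + ((R : ℝ) ^ 2 - (R : ℝ)) * E i ^ 2)
        = ∏ i : Fin N, (((R : ℝ)⁻¹) ^ 2 *
            ((R : ℝ) * (V i + E i ^ 2) + ((R : ℝ) ^ 2 - (R : ℝ)) * E i ^ 2)) := by
      rw [Finset.prod_mul_distrib, Finset.prod_const, Finset.card_univ, Fintype.card_fin]
    rw [this]
    refine Finset.prod_congr rfl fun i _ => ?_
    field_simp
    ring
  have hSmeas : Measurable fun ω => ∏ i, ((R : ℝ)⁻¹ * ∑ r, Y i r ω) := by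
    apply Finset.measurable_prod
    intro i _
    exact measurable_const.mul (Finset.measurable_sum _ fun r _ => hYmeas i r)
  have hSsqint : Integrable (fun ω => (∏ i, ((R : ℝ)⁻¹ * ∑ r, Y i r ω)) ^ 2) μ := by
    simp only [hprodSsq]
    exact (integrable_finset_sum _ fun h _ => (hterm2 h).1).const_mul _
  have hSL2 : MemLp (fun ω => ∏ i, ((R : ℝ)⁻¹ * ∑ r, Y i r ω)) 2 μ :=
    (memLp_two_iff_integrable_sq hSmeas.aestronglyMeasurable).mpr hSsqint
  have hVarM : variance (fun ω => ∏ i, ((R : ℝ)⁻¹ * ∑ r, Y i r ω)) μ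
      = ∏ i, ((R : ℝ)⁻¹ * V i + E i ^ 2) - ∏ i, E i ^ 2 := by
    rw [variance_eq_sub hSL2]
    have h1 : ((fun ω => ∏ i, ((R : ℝ)⁻¹ * ∑ r, Y i r ω)) ^ 2)
        = fun ω => (∏ i, ((R : ℝ)⁻¹ * ∑ r, Y i r ω)) ^ 2 := by
      funext ω; simp [Pi.pow_apply]
    rw [h1]
    show (∫ ω, (∏ i, ((R : ℝ)⁻¹ * ∑ r, Y i r ω)) ^ 2 ∂μ)
        - (∫ ω, ∏ i, ((R : ℝ)⁻¹ * ∑ r, Y i r ω) ∂μ) ^ 2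
      = ∏ i, ((R : ℝ)⁻¹ * V i + E i ^ 2) - ∏ i, E i ^ 2
    rw [hESsq, hES, ← Finset.prod_pow]
  ----------------------------------------------------------------
  -- Joint estimator
  ----------------------------------------------------------------
  have hPmeas : ∀ r : Fin R, Measurable fun ω => ∏ i, Y i r ω := fun r =>
    Finset.measurable_prod _ fun i _ => hYmeas i r
  have hPsq : ∀ r : Fin R, Integrable (fun ω => (∏ i, Y i r ω) ^ 2) μ ∧
      ∫ ω, (∏ i, Y i r ω) ^ 2 ∂μ = ∏ i, (V i + E i ^ 2) := by
    intro r
    have h := hterm2 (fun _ => (r, r))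
    have hx : ∀ ω : Ω, ∏ i, (Y i r ω * Y i r ω) = (∏ i, Y i r ω) ^ 2 := by
      intro ω
      rw [Finset.prod_mul_distrib, sq]
    constructor
    · exact h.1.congr (Filter.Eventually.of_forall hx)
    · have h2 : ∫ ω, (∏ i, Y i r ω) ^ 2 ∂μ = ∫ ω, ∏ i, (Y i r ω * Y i r ω) ∂μ :=
        integral_congr_ae (Filter.Eventually.of_forall fun ω => (hx ω).symm)
      rw [h2, h.2]
      simp
  have hPL2 : ∀ r : Fin R, MemLp (fun ω => ∏ i, Y i r ω) 2 μ := fun r =>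
    (memLp_two_iff_integrable_sq (hPmeas r).aestronglyMeasurable).mpr (hPsq r).1
  have hVarP : ∀ r : Fin R, variance (fun ω => ∏ i, Y i r ω) μ
      = ∏ i, (V i + E i ^ 2) - ∏ i, E i ^ 2 := by
    intro r
    rw [variance_eq_sub (hPL2 r)]
    have h1 : ((fun ω => ∏ i, Y i r ω) ^ 2) = fun ω => (∏ i, Y i r ω) ^ 2 := by
      funext ω; simp [Pi.pow_apply]
    rw [h1]
    show (∫ ω, (∏ i, Y i r ω) ^ 2 ∂μ) - (∫ ω, ∏ i, Y i r ω ∂μ) ^ 2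
      = ∏ i, (V i + E i ^ 2) - ∏ i, E i ^ 2
    rw [(hPsq r).2, (hterm1 (fun _ => r)).2, ← Finset.prod_pow]
  have hpairwise : Set.Pairwise (↑(Finset.univ : Finset (Fin R))) fun r r' =>
      IndepFun (fun ω => ∏ i, Y i r ω) (fun ω => ∏ i, Y i r' ω) μ := by
    intro r _ r' _ hrr'
    have hdisj : Disjoint ((Finset.univ : Finset (Fin N)) ×ˢ ({r} : Finset (Fin R)))
        (Finset.univ ×ˢ ({r'} : Finset (Fin R))) := by
      rw [Finset.disjoint_left]
      rintro ⟨i, s⟩ hs ht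
      simp only [Finset.mem_product, Finset.mem_singleton, Finset.mem_univ, true_and] at hs ht
      exact hrr' (hs ▸ ht ▸ rfl)
    have hbig := hYindep.indepFun_finset (Finset.univ ×ˢ {r}) (Finset.univ ×ˢ {r'}) hdisj
      (fun p => hYmeas p.1 p.2)
    have hmr : ∀ s : Fin R, Measurable fun v :
        ((p : ((Finset.univ : Finset (Fin N)) ×ˢ ({s} : Finset (Fin R)) :
          Finset (Fin N × Fin R))) → ℝ) => ∏ i : Fin N, v ⟨(i, s), by simp⟩ :=
      fun s => Finset.measurable_prod _ fun i _ => measurable_pi_apply _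
    have hcomp := hbig.comp (hmr r) (hmr r')
    exact hcomp
  have hVarJ : variance (fun ω => (R : ℝ)⁻¹ * ∑ r, ∏ i, Y i r ω) μ
      = (R : ℝ)⁻¹ * (∏ i, (V i + E i ^ 2) - ∏ i, E i ^ 2) := by
    rw [variance_const_mul]
    have hfun : (fun ω => ∑ r, ∏ i, Y i r ω)
        = ∑ r : Fin R, fun ω => ∏ i, Y i r ω := by
      funext ω; simp [Finset.sum_apply]
    rw [hfun, IndepFun.variance_sum (fun r _ => hPL2 r) hpairwise]
    have hsc : ∑ r ∈ (Finset.univ : Finset (Fin R)), variance (fun ω => ∏ i, Y i r ω) μ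
        = ∑ r ∈ (Finset.univ : Finset (Fin R)), (∏ i, (V i + E i ^ 2) - ∏ i, E i ^ 2) :=
      Finset.sum_congr rfl fun r _ => hVarP r
    rw [hsc, Finset.sum_const, Finset.card_univ, Fintype.card_fin, nsmul_eq_mul]
    field_simp
  ----------------------------------------------------------------
  -- conclusion
  ----------------------------------------------------------------
  have hEq : variance (fun ω => (R : ℝ)⁻¹ * ∑ r, ∏ i, Y i r ω) μ
      - variance (fun ω => ∏ i, ((R : ℝ)⁻¹ * ∑ r, Y i r ω)) μ
      = (R : ℝ)⁻¹ * ∑ k ∈ Finset.Icc 2 N, (1 - ((R : ℝ) ^ (k - 1))⁻¹) *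
          ∑ C ∈ Finset.univ.powerset.filter (fun C : Finset (Fin N) => C.card = k),
            (∏ i ∈ C, variance (X i) μ) * ∏ j ∈ Cᶜ, (∫ ω, X j ω ∂μ) ^ 2 := by
    rw [hVarJ, hVarM]
    exact aux_alg hN hR V (fun j => E j ^ 2)
  refine ⟨hEq, ?_⟩
  have hnn : 0 ≤ (R : ℝ)⁻¹ * ∑ k ∈ Finset.Icc 2 N, (1 - ((R : ℝ) ^ (k - 1))⁻¹) *
      ∑ C ∈ Finset.univ.powerset.filter (fun C : Finset (Fin N) => C.card = k),
        (∏ i ∈ C, variance (X i) μ) * ∏ j ∈ Cᶜ, (∫ ω, X j ω ∂μ) ^ 2 := by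
    apply mul_nonneg (by positivity)
    apply Finset.sum_nonneg
    intro k _
    apply mul_nonneg
    · have h1R : (1 : ℝ) ≤ (R : ℝ) ^ (k - 1) := one_le_pow₀ (by exact_mod_cast hR)
      have := inv_le_one_of_one_le₀ h1R
      linarith
    · apply Finset.sum_nonneg
      intro C _
      apply mul_nonneg
      · exact Finset.prod_nonneg fun i _ => variance_nonneg _ _
      · exact Finset.prod_nonneg fun j _ => sq_nonneg _
  linarith [hEq, hnn]
end

section
/- Suppose R > 1 and there exist two distinct indices i ≠ j with Vᵢ > 0 and Vⱼ > 0 such that E_k ≠ 0 for every k ∉ {i, j}. Then the joint estimator has strictly larger variance than the marginal estimator: Var(Î_J) > Var(Î_M). -/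
open MeasureTheory ProbabilityTheory Finset

section Aux
variable {Ω : Type*} [MeasurableSpace Ω] {μ : Measure Ω} [IsProbabilityMeasure μ]

lemma aux_integral_prod {ι : Type*} (f : ι → Ω → ℝ) (s : Finset ι)
    (hint : ∀ i, Integrable (f i) μ)
    (hpair : ∀ (t : Finset ι) (i : ι), i ∉ t →
      IndepFun (f i) (fun ω => ∏ j ∈ t, f j ω) μ) :
    Integrable (fun ω => ∏ j ∈ s, f j ω) μ ∧
      ∫ ω, ∏ j ∈ s, f j ω ∂μ = ∏ j ∈ s, ∫ ω, f j ω ∂μ := by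
  classical
  induction s using Finset.cons_induction with
  | empty => simp
  | cons i t hit ih =>
    have h := hpair t i hit
    have hInt : Integrable (fun ω => f i ω * ∏ j ∈ t, f j ω) μ :=
      h.integrable_mul (hint i) ih.1
    have hEq : ∫ ω, f i ω * ∏ j ∈ t, f j ω ∂μ
        = (∫ ω, f i ω ∂μ) * ∫ ω, ∏ j ∈ t, f j ω ∂μ :=
      h.integral_fun_mul_eq_mul_integral (hint i).aestronglyMeasurable ih.1.aestronglyMeasurable
    constructor
    · simpa only [Finset.prod_cons] using hInt
    · simp only [Finset.prod_cons]
      rw [show (∫ ω, f i ω * ∏ j ∈ t, f j ω ∂μ) = (∫ ω, f i ω ∂μ) * ∫ ω, ∏ j ∈ t, f j ω ∂μ from hEq, ih.2]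

lemma aux_variance_prod {ι : Type*} [Fintype ι] (f : ι → Ω → ℝ)
    (hmeas : ∀ i, Measurable (f i)) (hL2 : ∀ i, MemLp (f i) 2 μ)
    (hpair : ∀ (t : Finset ι) (i : ι), i ∉ t →
      IndepFun (f i) (fun ω => ∏ j ∈ t, f j ω) μ)
    (hpairsq : ∀ (t : Finset ι) (i : ι), i ∉ t →
      IndepFun (fun ω => f i ω ^ 2) (fun ω => ∏ j ∈ t, f j ω ^ 2) μ) :
    variance (fun ω => ∏ i, f i ω) μ
      = ∏ i, (∫ ω, f i ω ^ 2 ∂μ) - ∏ i, (∫ ω, f i ω ∂μ) ^ 2 := by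
  have hint : ∀ i, Integrable (f i) μ := fun i => (hL2 i).integrable one_le_two
  have h1 := aux_integral_prod f Finset.univ hint hpair
  have h2 := aux_integral_prod (fun i ω => f i ω ^ 2) Finset.univ
      (fun i => (hL2 i).integrable_sq) hpairsq
  have hPmeas : Measurable (fun ω => ∏ i, f i ω) :=
    Finset.measurable_prod _ fun i _ => hmeas i
  have hsq : (fun ω => (∏ i, f i ω) ^ 2) = fun ω => ∏ i, f i ω ^ 2 := by
    funext ω; rw [← Finset.prod_pow]
  have hP2 : MemLp (fun ω => ∏ i, f i ω) 2 μ := by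
    rw [memLp_two_iff_integrable_sq hPmeas.aestronglyMeasurable, hsq]
    exact h2.1
  rw [variance_eq_sub hP2]
  have e1 : μ[(fun ω => ∏ i, f i ω) ^ 2] = ∏ i, (∫ ω, f i ω ^ 2 ∂μ) := by
    have : ((fun ω => ∏ i, f i ω) ^ 2) = fun ω => ∏ i, f i ω ^ 2 := by
      funext ω; simp [← Finset.prod_pow]
    rw [this]
    exact h2.2
  rw [e1, h1.2, Finset.prod_pow]
end Aux


lemma aux_key_ineq {N : ℕ} (v e : Fin N → ℝ) (hv : ∀ k, 0 ≤ v k)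
    {R : ℝ} (hR : 1 < R) (i j : Fin N) (hij : i ≠ j)
    (hvi : 0 < v i) (hvj : 0 < v j)
    (he : ∀ k, k ≠ i → k ≠ j → e k ≠ 0) :
    ∏ k, (v k * R⁻¹ + e k ^ 2) - ∏ k, e k ^ 2
      < R⁻¹ * (∏ k, (v k + e k ^ 2) - ∏ k, e k ^ 2) := by
  classical
  have hR0 : (0:ℝ) < R := lt_trans one_pos hR
  have hRinv : 0 < R⁻¹ := inv_pos.mpr hR0
  have hRinv1 : R⁻¹ < 1 := inv_lt_one_of_one_lt₀ hR
  set b : Fin N → ℝ := fun k => e k ^ 2 with hb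
  have hb0 : ∀ k, 0 ≤ b k := fun k => sq_nonneg _
  set Pt : Finset (Fin N) → ℝ :=
    fun t => (∏ k ∈ t, v k) * ∏ k ∈ Finset.univ \ t, b k with hPt
  have hPt0 : ∀ t, 0 ≤ Pt t := fun t =>
    mul_nonneg (Finset.prod_nonneg fun k _ => hv k) (Finset.prod_nonneg fun k _ => hb0 k)
  have expand1 : ∏ k, (v k * R⁻¹ + b k)
      = ∑ t ∈ Finset.univ.powerset, R⁻¹ ^ t.card * Pt t := by
    rw [Finset.prod_add]
    refine Finset.sum_congr rfl fun t _ => ?_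
    rw [hPt]
    rw [Finset.prod_mul_distrib, Finset.prod_const]
    ring
  have expand2 : ∏ k, (v k + b k) = ∑ t ∈ Finset.univ.powerset, Pt t :=
    Finset.prod_add v b Finset.univ
  have hPemp : Pt ∅ = ∏ k, b k := by simp [hPt]
  have key : ∑ t ∈ Finset.univ.powerset,
        (R⁻¹ ^ t.card * Pt t + if t = (∅ : Finset (Fin N)) then R⁻¹ * Pt ∅ else 0)
      < ∑ t ∈ Finset.univ.powerset,
        (R⁻¹ * Pt t + if t = (∅ : Finset (Fin N)) then Pt ∅ else 0) := by
    refine Finset.sum_lt_sum (fun t ht => ?_) ⟨{i, j}, Finset.mem_powerset.mpr (Finset.subset_univ _), ?_⟩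
    · rcases eq_or_ne t ∅ with rfl | hne
      · simp
        nlinarith [hPt0 (∅ : Finset (Fin N))]
      · simp only [if_neg hne, add_zero]
        have h1 : 1 ≤ t.card := Finset.card_pos.mpr (Finset.nonempty_of_ne_empty hne)
        have : R⁻¹ ^ t.card ≤ R⁻¹ := by
          simpa using pow_le_pow_of_le_one hRinv.le hRinv1.le h1
        exact mul_le_mul_of_nonneg_right this (hPt0 t)
    · have hne : ({i, j} : Finset (Fin N)) ≠ ∅ := by
        simp
      have hcard : ({i, j} : Finset (Fin N)).card = 2 := Finset.card_pair hij
      simp only [if_neg hne, add_zero, hcard]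
      have hPpos : 0 < Pt {i, j} := by
        apply mul_pos
        · rw [Finset.prod_pair hij]; exact mul_pos hvi hvj
        · apply Finset.prod_pos
          intro k hk
          simp only [Finset.mem_sdiff, Finset.mem_univ, Finset.mem_insert,
            Finset.mem_singleton, true_and, not_or] at hk
          have := he k hk.1 hk.2
          positivity
      have hlt : R⁻¹ ^ 2 < R⁻¹ := by nlinarith
      exact mul_lt_mul_of_pos_right hlt hPpos
  rw [Finset.sum_add_distrib, Finset.sum_add_distrib,
    Finset.sum_ite_eq' Finset.univ.powerset (∅ : Finset (Fin N)),
    Finset.sum_ite_eq' Finset.univ.powerset (∅ : Finset (Fin N))] at key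
  simp only [Finset.mem_powerset, Finset.empty_subset, if_true] at key
  rw [expand1, expand2, hPemp.symm]
  have hmul : R⁻¹ * (∑ t ∈ Finset.univ.powerset, Pt t - Pt ∅)
      = ∑ t ∈ Finset.univ.powerset, R⁻¹ * Pt t - R⁻¹ * Pt ∅ := by
    rw [mul_sub, Finset.mul_sum]
  rw [hmul]
  linarith

/-- If `R > 1` and there are two distinct indices `i ≠ j` with
`Vᵢ > 0` and `Vⱼ > 0` such that `E_k ≠ 0` for every `k ∉ {i, j}`, then the joint
estimator has strictly larger variance than the marginal estimator. -/
theorem variance_joint_gt_marginal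
    {Ω : Type*} [MeasurableSpace Ω] (μ : Measure Ω) [IsProbabilityMeasure μ]
    (N R : ℕ) (hN : 2 ≤ N) (hR : 1 < R)
    (X : Fin N → Ω → ℝ)
    (hXmeas : ∀ i, Measurable (X i))
    (hXL2 : ∀ i, MemLp (X i) 2 μ)
    (hXindep : iIndepFun X μ)
    (Y : Fin N → Fin R → Ω → ℝ)
    (hYmeas : ∀ i r, Measurable (Y i r))
    (hYindep : iIndepFun
      (fun p : Fin N × Fin R => Y p.1 p.2) μ)
    (hYdist : ∀ i r, IdentDistrib (Y i r) (X i) μ μ)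
    (i j : Fin N) (hij : i ≠ j)
    (hVi : 0 < variance (X i) μ) (hVj : 0 < variance (X j) μ)
    (hE : ∀ k, k ≠ i → k ≠ j → (∫ ω, X k ω ∂μ) ≠ 0) :
    variance (fun ω => ∏ i', ((R : ℝ)⁻¹ * ∑ r, Y i' r ω)) μ
      < variance (fun ω => (R : ℝ)⁻¹ * ∑ r, ∏ i', Y i' r ω) μ := by
  classical
  -- block independence helper
  have key : ∀ (S T : Finset (Fin N × Fin R)), Disjoint S T →
      ∀ (F : (↥S → ℝ) → ℝ) (G : (↥T → ℝ) → ℝ), Measurable F → Measurable G →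
      IndepFun (fun ω => F (fun p => Y (p : Fin N × Fin R).1 (p : Fin N × Fin R).2 ω))
        (fun ω => G (fun p => Y (p : Fin N × Fin R).1 (p : Fin N × Fin R).2 ω)) μ := by
    intro S T hST F G hF hG
    exact (hYindep.indepFun_finset S T hST (fun p => hYmeas p.1 p.2)).comp hF hG
  -- within-sample independence (fixed r)
  have hbase : ∀ (φ : ℝ → ℝ), Measurable φ → ∀ (r : Fin R) (t : Finset (Fin N)) (i' : Fin N), i' ∉ t →
      IndepFun (fun ω => φ (Y i' r ω)) (fun ω => ∏ j' ∈ t, φ (Y j' r ω)) μ := by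
    intro φ hφ r t i' hit
    have hd : Disjoint ({(i', r)} : Finset (Fin N × Fin R)) (t ×ˢ {r}) := by
      simp only [Finset.disjoint_singleton_left, Finset.mem_product, Finset.mem_singleton]
      tauto
    have h := key {(i', r)} (t ×ˢ {r}) hd
        (fun x => φ (x ⟨(i', r), Finset.mem_singleton_self _⟩))
        (fun x => ∏ j' ∈ t.attach, φ (x ⟨(j'.1, r), by
          simp [Finset.mem_product, j'.2]⟩))
        (hφ.comp (measurable_pi_apply _))
        (Finset.measurable_prod _ fun j' _ => hφ.comp (measurable_pi_apply _))
    have e2 : (fun ω => ∏ j' ∈ t.attach, φ (Y j'.1 r ω))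
        = fun ω => ∏ j' ∈ t, φ (Y j' r ω) := by
      funext ω; exact Finset.prod_attach t fun j' => φ (Y j' r ω)
    rw [← e2]
    exact h
  -- between-block independence (averages over r)
  have hblock : ∀ (φ : ℝ → ℝ), Measurable φ → ∀ (t : Finset (Fin N)) (i' : Fin N), i' ∉ t →
      IndepFun (fun ω => φ ((R : ℝ)⁻¹ * ∑ r, Y i' r ω))
        (fun ω => ∏ j' ∈ t, φ ((R : ℝ)⁻¹ * ∑ r, Y j' r ω)) μ := by
    intro φ hφ t i' hit
    have hd : Disjoint (({i'} ×ˢ Finset.univ) : Finset (Fin N × Fin R)) (t ×ˢ Finset.univ) := by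
      simp only [Finset.disjoint_left, Finset.mem_product, Finset.mem_singleton,
        Finset.mem_univ, and_true]
      intro p hp
      rw [hp]
      exact hit
    have h := key ({i'} ×ˢ Finset.univ) (t ×ˢ Finset.univ) hd
        (fun x => φ ((R : ℝ)⁻¹ * ∑ p, x p))
        (fun x => ∏ j' ∈ t.attach, φ ((R : ℝ)⁻¹ * ∑ r : Fin R, x ⟨(j'.1, r), by
          simp [Finset.mem_product, j'.2]⟩))
        (hφ.comp (measurable_const.mul (Finset.measurable_sum _ fun p _ => measurable_pi_apply _)))
        (Finset.measurable_prod _ fun j' _ => hφ.comp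
          (measurable_const.mul (Finset.measurable_sum _ fun r _ => measurable_pi_apply _)))
    have e1 : (fun ω => φ ((R : ℝ)⁻¹ *
          ∑ p : ↥(({i'} ×ˢ Finset.univ) : Finset (Fin N × Fin R)), Y (p : Fin N × Fin R).1 (p : Fin N × Fin R).2 ω))
        = fun ω => φ ((R : ℝ)⁻¹ * ∑ r, Y i' r ω) := by
      funext ω
      congr 1
      rw [Finset.sum_coe_sort (({i'} ×ˢ Finset.univ) : Finset (Fin N × Fin R))
        (fun p => Y p.1 p.2 ω)]
      rw [Finset.sum_product, Finset.sum_singleton]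
    have e2 : (fun ω => ∏ j' ∈ t.attach, φ ((R : ℝ)⁻¹ * ∑ r : Fin R, Y j'.1 r ω))
        = fun ω => ∏ j' ∈ t, φ ((R : ℝ)⁻¹ * ∑ r, Y j' r ω) := by
      funext ω; exact Finset.prod_attach t fun j' => φ ((R : ℝ)⁻¹ * ∑ r, Y j' r ω)
    rw [← e1, ← e2]
    exact h
  -- cross-sample independence of the per-sample products
  have hpairZ : ∀ (r r' : Fin R), r ≠ r' →
      IndepFun (fun ω => ∏ i', Y i' r ω) (fun ω => ∏ i', Y i' r' ω) μ := by
    intro r r' hrr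
    have hd : Disjoint ((Finset.univ ×ˢ {r}) : Finset (Fin N × Fin R)) (Finset.univ ×ˢ {r'}) := by
      simp only [Finset.disjoint_left, Finset.mem_product, Finset.mem_singleton,
        Finset.mem_univ, true_and]
      intro p hp hp'
      exact hrr (hp ▸ hp'.symm ▸ rfl)
    have h := key (Finset.univ ×ˢ {r}) (Finset.univ ×ˢ {r'}) hd
        (fun x => ∏ i' : Fin N, x ⟨(i', r), by simp⟩)
        (fun x => ∏ i' : Fin N, x ⟨(i', r'), by simp⟩)
        (Finset.measurable_prod _ fun i' _ => measurable_pi_apply _)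
        (Finset.measurable_prod _ fun i' _ => measurable_pi_apply _)
    exact h
  have hcastR : (1:ℝ) < (R:ℝ) := by exact_mod_cast hR
  have hRne : ((R:ℝ)) ≠ 0 := by positivity
  have hYL2 : ∀ i' r, MemLp (Y i' r) 2 μ := fun i' r => (hYdist i' r).symm.memLp_snd (hXL2 i')
  have hYint : ∀ i' r, Integrable (Y i' r) μ := fun i' r => (hYL2 i' r).integrable one_le_two
  have hYE : ∀ i' r, ∫ ω, Y i' r ω ∂μ = ∫ ω, X i' ω ∂μ := fun i' r => (hYdist i' r).integral_eq
  have hYQ : ∀ i' r, ∫ ω, Y i' r ω ^ 2 ∂μ = ∫ ω, X i' ω ^ 2 ∂μ := fun i' r =>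
    ((hYdist i' r).comp (measurable_id.pow_const 2)).integral_eq
  have hYV : ∀ i' r, variance (Y i' r) μ = variance (X i') μ := fun i' r =>
    (hYdist i' r).variance_eq
  have hsumfun : ∀ i', (fun ω => ∑ r, Y i' r ω) = ∑ r, Y i' r := by
    intro i'; funext ω; simp
  have hAL2 : ∀ i', MemLp (fun ω => (R:ℝ)⁻¹ * ∑ r, Y i' r ω) 2 μ := by
    intro i'
    have hs : MemLp (fun ω => ∑ r, Y i' r ω) 2 μ := by
      rw [hsumfun i']
      exact memLp_finsetSum' Finset.univ (fun r _ => hYL2 i' r)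
    exact hs.const_mul _
  have hvarA : ∀ i', variance (fun ω => (R:ℝ)⁻¹ * ∑ r, Y i' r ω) μ
      = variance (X i') μ * (R:ℝ)⁻¹ := by
    intro i'
    rw [variance_const_mul ((R:ℝ)⁻¹) (fun ω => ∑ r, Y i' r ω), hsumfun i',
      IndepFun.variance_sum (fun r _ => hYL2 i' r)
        (fun r _ r' _ hne => hYindep.indepFun (show ((i', r) : Fin N × Fin R) ≠ (i', r') by simp [Prod.ext_iff, hne]))]
    rw [Finset.sum_congr rfl fun r _ => hYV i' r, Finset.sum_const, Finset.card_univ,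
      Fintype.card_fin, nsmul_eq_mul]
    field_simp
  have hEA : ∀ i', ∫ ω, (R:ℝ)⁻¹ * ∑ r, Y i' r ω ∂μ = ∫ ω, X i' ω ∂μ := by
    intro i'
    rw [integral_const_mul, integral_finset_sum _ (fun r _ => hYint i' r)]
    rw [Finset.sum_congr rfl fun r _ => hYE i' r, Finset.sum_const, Finset.card_univ,
      Fintype.card_fin, nsmul_eq_mul]
    field_simp
  have hQA : ∀ i', ∫ ω, ((R:ℝ)⁻¹ * ∑ r, Y i' r ω) ^ 2 ∂μ
      = variance (X i') μ * (R:ℝ)⁻¹ + (∫ ω, X i' ω ∂μ) ^ 2 := by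
    intro i'
    have h := variance_eq_sub (hAL2 i')
    have h2 : μ[(fun ω => (R:ℝ)⁻¹ * ∑ r, Y i' r ω) ^ 2]
        = ∫ ω, ((R:ℝ)⁻¹ * ∑ r, Y i' r ω) ^ 2 ∂μ := rfl
    rw [h2, hvarA i', hEA i'] at h
    linarith
  -- marginal variance
  have hVarM : variance (fun ω => ∏ i', ((R:ℝ)⁻¹ * ∑ r, Y i' r ω)) μ
      = ∏ i', (variance (X i') μ * (R:ℝ)⁻¹ + (∫ ω, X i' ω ∂μ) ^ 2)
        - ∏ i', (∫ ω, X i' ω ∂μ) ^ 2 := by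
    calc variance (fun ω => ∏ i', ((R:ℝ)⁻¹ * ∑ r, Y i' r ω)) μ
        = ∏ i', (∫ ω, ((R:ℝ)⁻¹ * ∑ r, Y i' r ω) ^ 2 ∂μ)
          - ∏ i', (∫ ω, (R:ℝ)⁻¹ * ∑ r, Y i' r ω ∂μ) ^ 2 :=
          aux_variance_prod (fun i' ω => (R:ℝ)⁻¹ * ∑ r, Y i' r ω)
            (fun i' => measurable_const.mul (Finset.measurable_sum _ fun r _ => hYmeas i' r))
            hAL2
            (fun t i' h => hblock (fun x => x) measurable_id t i' h)
            (fun t i' h => hblock (fun x => x ^ 2) (measurable_id.pow_const 2) t i' h)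
      _ = _ := by
          have e : ∀ k : Fin N, (∫ ω, (R:ℝ)⁻¹ * ∑ r, Y k r ω ∂μ) ^ 2
              = (∫ ω, X k ω ∂μ) ^ 2 := fun k => by rw [hEA k]
          rw [Finset.prod_congr rfl fun k _ => hQA k,
            Finset.prod_congr rfl fun k _ => e k]
  -- joint side
  have hZmeas : ∀ r, Measurable (fun ω => ∏ i', Y i' r ω) :=
    fun r => Finset.measurable_prod _ fun i' _ => hYmeas i' r
  have hZsqint : ∀ r, Integrable (fun ω => ∏ i', Y i' r ω ^ 2) μ := fun r =>
    (aux_integral_prod (fun i' ω => Y i' r ω ^ 2) Finset.univ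
      (fun i' => (hYL2 i' r).integrable_sq)
      (fun t i' h => hbase (fun x => x ^ 2) (measurable_id.pow_const 2) r t i' h)).1
  have hZL2 : ∀ r, MemLp (fun ω => ∏ i', Y i' r ω) 2 μ := by
    intro r
    rw [memLp_two_iff_integrable_sq (hZmeas r).aestronglyMeasurable]
    have hh : (fun ω => (∏ i', Y i' r ω) ^ 2) = fun ω => ∏ i', Y i' r ω ^ 2 := by
      funext ω; rw [← Finset.prod_pow]
    rw [hh]; exact hZsqint r
  have hvarZ : ∀ r, variance (fun ω => ∏ i', Y i' r ω) μ
      = ∏ i', (∫ ω, X i' ω ^ 2 ∂μ) - ∏ i', (∫ ω, X i' ω ∂μ) ^ 2 := by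
    intro r
    calc variance (fun ω => ∏ i', Y i' r ω) μ
        = ∏ i', (∫ ω, Y i' r ω ^ 2 ∂μ) - ∏ i', (∫ ω, Y i' r ω ∂μ) ^ 2 :=
          aux_variance_prod (fun i' ω => Y i' r ω) (fun i' => hYmeas i' r)
            (fun i' => hYL2 i' r)
            (fun t i' h => hbase (fun x => x) measurable_id r t i' h)
            (fun t i' h => hbase (fun x => x ^ 2) (measurable_id.pow_const 2) r t i' h)
      _ = _ := by
          have e : ∀ k : Fin N, (∫ ω, Y k r ω ∂μ) ^ 2 = (∫ ω, X k ω ∂μ) ^ 2 :=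
            fun k => by rw [hYE k r]
          rw [Finset.prod_congr rfl fun k _ => hYQ k r,
            Finset.prod_congr rfl fun k _ => e k]
  have hVarJ : variance (fun ω => (R:ℝ)⁻¹ * ∑ r, ∏ i', Y i' r ω) μ
      = (R:ℝ)⁻¹ * (∏ i', (∫ ω, X i' ω ^ 2 ∂μ) - ∏ i', (∫ ω, X i' ω ∂μ) ^ 2) := by
    rw [variance_const_mul ((R:ℝ)⁻¹) (fun ω => ∑ r, ∏ i', Y i' r ω)]
    have hfun : (fun ω => ∑ r, ∏ i', Y i' r ω) = ∑ r, (fun ω => ∏ i', Y i' r ω) := by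
      funext ω; simp
    rw [hfun, IndepFun.variance_sum (fun r _ => hZL2 r)
      (fun r _ r' _ hne => hpairZ r r' hne)]
    rw [Finset.sum_congr rfl fun r _ => hvarZ r, Finset.sum_const, Finset.card_univ,
      Fintype.card_fin, nsmul_eq_mul]
    field_simp
  have hQV : ∀ k, ∫ ω, X k ω ^ 2 ∂μ = variance (X k) μ + (∫ ω, X k ω ∂μ) ^ 2 := by
    intro k
    have h := variance_eq_sub (hXL2 k)
    have h2 : μ[(X k) ^ 2] = ∫ ω, X k ω ^ 2 ∂μ := rfl
    rw [h2] at h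
    linarith
  rw [hVarM, hVarJ, Finset.prod_congr rfl fun k _ => hQV k]
  exact aux_key_ineq (fun k => variance (X k) μ) (fun k => ∫ ω, X k ω ∂μ)
    (fun k => variance_nonneg _ μ) hcastR i j hij hVi hVj hE
end

section
/- Suppose Eᵢ ≠ 0 for every i = 1,…,N, and write CVᵢ² = Vᵢ/Eᵢ² for the squared coefficient of variation. Then the variance of the joint estimator equals Var(Î_J) = (1/R) · (∏_{i=1}^N Eᵢ²) · ( ∏_{i=1}^N (CVᵢ² + 1) − 1 ). -/
open MeasureTheory ProbabilityTheory Finset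

lemma aux_iIndepFun_precomp {Ω ι ι' : Type*} [MeasurableSpace Ω] {μ : Measure Ω}
    {β : Type*} {m : MeasurableSpace β} {f : ι → Ω → β}
    (g : ι' → ι) (hg : Function.Injective g)
    (h : iIndepFun (m := fun _ => m) f μ) :
    iIndepFun (m := fun _ => m) (fun i => f (g i)) μ := by
  classical
  rw [iIndepFun_iff_measure_inter_preimage_eq_mul] at h ⊢
  intro S sets hsets
  set sets' : ι → Set β := fun j => if hj : ∃ i, g i = j then sets hj.choose else Set.univ
    with hsets'def
  have key : ∀ i : ι', sets' (g i) = sets i := by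
    intro i
    have hex : ∃ i', g i' = g i := ⟨i, rfl⟩
    simp only [hsets'def, dif_pos hex]
    rw [hg hex.choose_spec]
  have hmeas' : ∀ j, j ∈ S.map ⟨g, hg⟩ → MeasurableSet[m] (sets' j) := by
    intro j hj
    obtain ⟨i, hi, rfl⟩ := Finset.mem_map.1 hj
    simp only [Function.Embedding.coeFn_mk]
    rw [key]
    exact hsets i hi
  have := h (S.map ⟨g, hg⟩) hmeas'
  rw [Finset.prod_map] at this
  have hinter : ⋂ j ∈ S.map ⟨g, hg⟩, f j ⁻¹' sets' j
      = ⋂ i ∈ S, f (g i) ⁻¹' sets i := by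
    ext x
    simp only [Set.mem_iInter, Finset.mem_map, Function.Embedding.coeFn_mk]
    constructor
    · intro hx i hi
      have := hx (g i) ⟨i, hi, rfl⟩
      rwa [key] at this
    · rintro hx j ⟨i, hi, rfl⟩
      rw [key]
      exact hx i hi
  rw [hinter] at this
  simpa only [key, Function.Embedding.coeFn_mk] using this

lemma aux_prod_integrable_integral {Ω ι : Type*} [MeasurableSpace Ω] {μ : Measure Ω}
    [IsProbabilityMeasure μ] {f : ι → Ω → ℝ}
    (h : iIndepFun f μ)
    (hm : ∀ i, Measurable (f i)) (hint : ∀ i, Integrable (f i) μ) (s : Finset ι) :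
    Integrable (fun ω => ∏ i ∈ s, f i ω) μ ∧
      (∫ ω, ∏ i ∈ s, f i ω ∂μ) = ∏ i ∈ s, ∫ ω, f i ω ∂μ := by
  classical
  induction s using Finset.induction_on with
  | empty => simp
  | @insert a s ha ih =>
    have hprodeq : (∏ j ∈ s, f j) = fun ω => ∏ j ∈ s, f j ω := by
      funext ω; simp
    have hind : IndepFun (f a) (fun ω => ∏ j ∈ s, f j ω) μ := by
      have := (h.indepFun_finset_prod_of_notMem hm ha).symm
      rwa [hprodeq] at this
    simp only [Finset.prod_insert ha]
    refine ⟨?_, ?_⟩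
    · exact hind.integrable_mul (hint a) ih.1
    · have hmul := hind.integral_mul_eq_mul_integral (hint a).1 ih.1.1
      rw [ih.2] at hmul
      exact hmul

/-- If `Eᵢ ≠ 0` for all `i` and `CVᵢ² = Vᵢ/Eᵢ²`, then
`Var(Î_J) = (1/R) · (∏ᵢ Eᵢ²) · (∏ᵢ (CVᵢ² + 1) − 1)`. -/
theorem variance_joint_estimator_cv
    {Ω : Type*} [MeasurableSpace Ω] (μ : Measure Ω) [IsProbabilityMeasure μ]
    (N R : ℕ) (hN : 1 ≤ N) (hR : 1 ≤ R)
    (X : Fin N → Ω → ℝ)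
    (hXmeas : ∀ i, Measurable (X i))
    (hXL2 : ∀ i, MemLp (X i) 2 μ)
    (hXindep : iIndepFun X μ)
    (Y : Fin N → Fin R → Ω → ℝ)
    (hYmeas : ∀ i r, Measurable (Y i r))
    (hYindep : iIndepFun
      (fun p : Fin N × Fin R => Y p.1 p.2) μ)
    (hYdist : ∀ i r, IdentDistrib (Y i r) (X i) μ μ)
    (hE : ∀ i, (∫ ω, X i ω ∂μ) ≠ 0) :
    variance (fun ω => (R : ℝ)⁻¹ * ∑ r, ∏ i, Y i r ω) μ
      = (R : ℝ)⁻¹ * (∏ i, (∫ ω, X i ω ∂μ) ^ 2) *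
          ((∏ i, (variance (X i) μ / (∫ ω, X i ω ∂μ) ^ 2 + 1)) - 1) := by
  classical
  set E : Fin N → ℝ := fun i => ∫ ω, X i ω ∂μ with hEdef
  set M : Fin N → ℝ := fun i => ∫ ω, (X i ω) ^ 2 ∂μ with hMdef
  -- basic facts about X
  have hXint : ∀ i, Integrable (X i) μ := fun i => (hXL2 i).integrable one_le_two
  have hXsqint : ∀ i, Integrable (fun ω => (X i ω) ^ 2) μ := fun i => by
    have := (hXL2 i).integrable_sq
    simpa using this
  -- transfer to Y
  have hYident : ∀ i r, IdentDistrib (Y i r) (X i) μ μ := hYdist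
  have hYint : ∀ i r, Integrable (Y i r) μ := fun i r =>
    (hYdist i r).integrable_iff.2 (hXint i)
  have hYsqident : ∀ i r, IdentDistrib (fun ω => (Y i r ω) ^ 2) (fun ω => (X i ω) ^ 2) μ μ :=
    fun i r => (hYdist i r).comp (measurable_id.pow_const 2)
  have hYsqint : ∀ i r, Integrable (fun ω => (Y i r ω) ^ 2) μ := fun i r =>
    (hYsqident i r).integrable_iff.2 (hXsqint i)
  have hYE : ∀ i r, (∫ ω, Y i r ω ∂μ) = E i := fun i r => (hYdist i r).integral_eq
  have hYM : ∀ i r, (∫ ω, (Y i r ω) ^ 2 ∂μ) = M i := fun i r => (hYsqident i r).integral_eq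
  -- independence of columns
  have hcol : ∀ r : Fin R, iIndepFun
      (fun i => Y i r) μ := by
    intro r
    have hginj : Function.Injective (fun i : Fin N => ((i, r) : Fin N × Fin R)) := by
      intro a b hab; simpa using congrArg Prod.fst hab
    exact aux_iIndepFun_precomp _ hginj hYindep
  have hcolsq : ∀ r : Fin R, iIndepFun
      (fun i ω => (Y i r ω) ^ 2) μ := by
    intro r
    have := (hcol r).comp (fun _ => fun x : ℝ => x ^ 2)
      (fun _ => measurable_id.pow_const 2)
    exact this
  -- the product random variables
  set P : Fin R → Ω → ℝ := fun r ω => ∏ i, Y i r ω with hPdef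
  have hPmeas : ∀ r, Measurable (P r) := fun r =>
    Finset.measurable_prod _ (fun i _ => hYmeas i r)
  have hPint : ∀ r, Integrable (P r) μ := fun r =>
    (aux_prod_integrable_integral (hcol r) (fun i => hYmeas i r) (fun i => hYint i r) univ).1
  have hPE : ∀ r, (∫ ω, P r ω ∂μ) = ∏ i, E i := by
    intro r
    have := (aux_prod_integrable_integral (hcol r) (fun i => hYmeas i r)
      (fun i => hYint i r) univ).2
    simpa [hYE] using this
  have hPsq : ∀ r, Integrable (fun ω => (P r ω) ^ 2) μ ∧ (∫ ω, (P r ω) ^ 2 ∂μ) = ∏ i, M i := by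
    intro r
    have h2 := aux_prod_integrable_integral (hcolsq r)
      (fun i => (hYmeas i r).pow_const 2) (fun i => hYsqint i r) univ
    have hsq : ∀ ω, (P r ω) ^ 2 = ∏ i, (Y i r ω) ^ 2 := by
      intro ω; rw [hPdef]; simp [Finset.prod_pow]
    constructor
    · exact h2.1.congr (Filter.Eventually.of_forall fun ω => (hsq ω).symm)
    · rw [show (fun ω => (P r ω) ^ 2) = fun ω => ∏ i, (Y i r ω) ^ 2 from funext hsq]
      simpa [hYM] using h2.2
  have hPL2 : ∀ r, MemLp (P r) 2 μ := fun r =>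
    (memLp_two_iff_integrable_sq (hPmeas r).aestronglyMeasurable).2 (hPsq r).1
  -- variance of each P r
  have hPvar : ∀ r, variance (P r) μ = (∏ i, M i) - (∏ i, E i) ^ 2 := by
    intro r
    rw [variance_eq_sub (hPL2 r)]
    congr 1
    · simpa using (hPsq r).2
    · rw [hPE r]
  -- pairwise independence of P r
  have hPindep : Set.Pairwise ↑(univ : Finset (Fin R))
      (fun r s => IndepFun (P r) (P s) μ) := by
    intro r _ s _ hrs
    set Sr : Finset (Fin N × Fin R) := univ.map
      ⟨fun i : Fin N => (i, r), fun a b hab => by simpa using congrArg Prod.fst hab⟩ with hSr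
    set Ss : Finset (Fin N × Fin R) := univ.map
      ⟨fun i : Fin N => (i, s), fun a b hab => by simpa using congrArg Prod.fst hab⟩ with hSs
    have hdisj : Disjoint Sr Ss := by
      rw [Finset.disjoint_left]
      rintro ⟨i, t⟩ hmr hms
      simp only [hSr, hSs, Finset.mem_map, Function.Embedding.coeFn_mk] at hmr hms
      obtain ⟨a, -, ha⟩ := hmr
      obtain ⟨b, -, hb⟩ := hms
      exact hrs ((congrArg Prod.snd ha).trans (congrArg Prod.snd hb).symm)
    have hbig := hYindep.indepFun_finset Sr Ss hdisj (fun p => hYmeas p.1 p.2)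
    have hmemr : ∀ i : Fin N, ((i, r) : Fin N × Fin R) ∈ Sr := fun i =>
      Finset.mem_map.2 ⟨i, Finset.mem_univ i, rfl⟩
    have hmems : ∀ i : Fin N, ((i, s) : Fin N × Fin R) ∈ Ss := fun i =>
      Finset.mem_map.2 ⟨i, Finset.mem_univ i, rfl⟩
    have hgr : Measurable (fun v : (↥Sr → ℝ) => ∏ i : Fin N, v ⟨(i, r), hmemr i⟩) :=
      Finset.measurable_prod _ (fun i _ => measurable_pi_apply _)
    have hgs : Measurable (fun v : (↥Ss → ℝ) => ∏ i : Fin N, v ⟨(i, s), hmems i⟩) :=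
      Finset.measurable_prod _ (fun i _ => measurable_pi_apply _)
    have := hbig.comp hgr hgs
    exact this
  -- put everything together
  have hsum : variance (fun ω => ∑ r, P r ω) μ = ∑ r : Fin R, variance (P r) μ := by
    have := IndepFun.variance_sum (μ := μ) (X := P) (s := univ)
      (fun r _ => hPL2 r) hPindep
    have hfe : (∑ r : Fin R, P r) = fun ω => ∑ r, P r ω := by funext ω; simp
    rwa [hfe] at this
  have hRpos : (R : ℝ) ≠ 0 := by positivity
  have hvar : variance (fun ω => (R : ℝ)⁻¹ * ∑ r, ∏ i, Y i r ω) μ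
      = (R : ℝ)⁻¹ * ((∏ i, M i) - (∏ i, E i) ^ 2) := by
    rw [variance_const_mul ((R : ℝ)⁻¹) (fun ω => ∑ r, P r ω) μ, hsum]
    simp only [hPvar, Finset.sum_const, card_univ, Fintype.card_fin, nsmul_eq_mul]
    rw [sq, mul_assoc]
    congr 1
    rw [← mul_assoc, inv_mul_cancel₀ hRpos, one_mul]
  rw [hvar]
  -- algebra
  have hVar : ∀ i, variance (X i) μ = M i - E i ^ 2 := by
    intro i
    rw [variance_eq_sub (hXL2 i)]
    congr 1
  have hterm : ∀ i, variance (X i) μ / E i ^ 2 + 1 = M i / E i ^ 2 := by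
    intro i
    rw [hVar i]
    have : E i ≠ 0 := hE i
    field_simp
    ring
  have hprodE : (∏ i, E i ^ 2) ≠ 0 :=
    Finset.prod_ne_zero_iff.2 (fun i _ => pow_ne_zero 2 (hE i))
  calc (R : ℝ)⁻¹ * ((∏ i, M i) - (∏ i, E i) ^ 2)
      = (R : ℝ)⁻¹ * ((∏ i, E i ^ 2) * ((∏ i, M i / E i ^ 2) - 1)) := by
        have hEprod : (∏ i, E i) ≠ 0 := Finset.prod_ne_zero_iff.2 (fun i _ => hE i)
        rw [Finset.prod_div_distrib, Finset.prod_pow]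
        field_simp
    _ = (R : ℝ)⁻¹ * (∏ i, E i ^ 2) * ((∏ i, (variance (X i) μ / E i ^ 2 + 1)) - 1) := by
        simp only [hterm]; ring
end

section
/- Suppose Eᵢ ≠ 0 for every i = 1,…,N, and write CVᵢ² = Vᵢ/Eᵢ² for the squared coefficient of variation. Then the variance of the marginal estimator equals Var(Î_M) = (∏_{i=1}^N Eᵢ²) · ( ∏_{i=1}^N (CVᵢ²/R + 1) − 1 ). -/
open MeasureTheory ProbabilityTheory Finset

lemma block_prod {Ω : Type*} [MeasurableSpace Ω] (μ : Measure Ω) [IsProbabilityMeasure μ]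
    {N R : ℕ} (Y : Fin N → Fin R → Ω → ℝ)
    (hYmeas : ∀ i r, Measurable (Y i r))
    (hYindep : iIndepFun
      (fun p : Fin N × Fin R => Y p.1 p.2) μ)
    (g : Fin N → (Fin R → ℝ) → ℝ) (hg : ∀ i, Measurable (g i))
    (hint : ∀ i, Integrable (fun ω => g i (fun r => Y i r ω)) μ)
    (s : Finset (Fin N)) :
    Integrable (fun ω => ∏ i ∈ s, g i (fun r => Y i r ω)) μ ∧
      ∫ ω, ∏ i ∈ s, g i (fun r => Y i r ω) ∂μ
        = ∏ i ∈ s, ∫ ω, g i (fun r => Y i r ω) ∂μ := by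
  classical
  induction s using Finset.induction_on with
  | empty => simp
  | @insert a s ha ih =>
    have hdisj : Disjoint ({a} ×ˢ (univ : Finset (Fin R))) (s ×ˢ univ) := by
      rw [Finset.disjoint_left]
      rintro ⟨i, r⟩ hp hq
      rw [Finset.mem_product] at hp hq
      simp only [Finset.mem_singleton] at hp
      exact ha (hp.1 ▸ hq.1)
    have hbig := hYindep.indepFun_finset ({a} ×ˢ univ) (s ×ˢ univ) hdisj
      (fun p => hYmeas p.1 p.2)
    set φ : (({a} ×ˢ (univ : Finset (Fin R))) → ℝ) → ℝ :=
      fun v => g a (fun r => v ⟨(a, r), Finset.mem_product.2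
        ⟨Finset.mem_singleton_self a, Finset.mem_univ r⟩⟩) with hφdef
    set ψ : ((s ×ˢ (univ : Finset (Fin R))) → ℝ) → ℝ :=
      fun v => ∏ i ∈ s.attach, g i.1 (fun r => v ⟨(i.1, r), Finset.mem_product.2
        ⟨i.2, Finset.mem_univ r⟩⟩) with hψdef
    have hφ : Measurable φ :=
      (hg a).comp (measurable_pi_lambda _ fun r => measurable_pi_apply _)
    have hψ : Measurable ψ :=
      Finset.measurable_prod _ fun i _ =>
        (hg i.1).comp (measurable_pi_lambda _ fun r => measurable_pi_apply _)
    have hIndep : IndepFun (fun ω => g a fun r => Y a r ω)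
        (fun ω => ∏ i ∈ s, g i fun r => Y i r ω) μ := by
      have hc := hbig.comp hφ hψ
      have h1 : (fun ω => g a fun r => Y a r ω)
          = φ ∘ (fun ω (p : ({a} ×ˢ (univ : Finset (Fin R)))) => Y (p : Fin N × Fin R).1 (p : Fin N × Fin R).2 ω) := rfl
      have h2 : (fun ω => ∏ i ∈ s, g i fun r => Y i r ω)
          = ψ ∘ (fun ω (p : (s ×ˢ (univ : Finset (Fin R)))) => Y (p : Fin N × Fin R).1 (p : Fin N × Fin R).2 ω) := by
        funext ω
        simp only [Function.comp, hψdef]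
        rw [← Finset.prod_attach s (fun i => g i fun r => Y i r ω)]
      rw [h1, h2]
      exact hc
    have hInt : Integrable (fun ω => ∏ i ∈ insert a s, g i (fun r => Y i r ω)) μ := by
      have := hIndep.integrable_mul (hint a) ih.1
      simp only [Finset.prod_insert ha]
      exact this
    refine ⟨hInt, ?_⟩
    simp only [Finset.prod_insert ha]
    have := hIndep.integral_fun_mul_eq_mul_integral (hint a).1 ih.1.1
    calc ∫ ω, (g a fun r => Y a r ω) * ∏ i ∈ s, g i (fun r => Y i r ω) ∂μ
        = (∫ ω, g a fun r => Y a r ω ∂μ) * ∫ ω, ∏ i ∈ s, g i (fun r => Y i r ω) ∂μ := this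
      _ = (∫ ω, g a fun r => Y a r ω ∂μ) * ∏ i ∈ s, ∫ ω, g i (fun r => Y i r ω) ∂μ := by
          rw [ih.2]

/-- If `Eᵢ ≠ 0` for all `i` and `CVᵢ² = Vᵢ/Eᵢ²`, then
`Var(Î_M) = (∏ᵢ Eᵢ²) · (∏ᵢ (CVᵢ²/R + 1) − 1)`. -/
theorem variance_marginal_estimator_cv
    {Ω : Type*} [MeasurableSpace Ω] (μ : Measure Ω) [IsProbabilityMeasure μ]
    (N R : ℕ) (hN : 1 ≤ N) (hR : 1 ≤ R)
    (X : Fin N → Ω → ℝ)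
    (hXmeas : ∀ i, Measurable (X i))
    (hXL2 : ∀ i, MemLp (X i) 2 μ)
    (hXindep : iIndepFun X μ)
    (Y : Fin N → Fin R → Ω → ℝ)
    (hYmeas : ∀ i r, Measurable (Y i r))
    (hYindep : iIndepFun
      (fun p : Fin N × Fin R => Y p.1 p.2) μ)
    (hYdist : ∀ i r, IdentDistrib (Y i r) (X i) μ μ)
    (hE : ∀ i, (∫ ω, X i ω ∂μ) ≠ 0) :
    variance (fun ω => ∏ i, ((R : ℝ)⁻¹ * ∑ r, Y i r ω)) μ
      = (∏ i, (∫ ω, X i ω ∂μ) ^ 2) *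
          ((∏ i, (variance (X i) μ / (∫ ω, X i ω ∂μ) ^ 2 / (R : ℝ) + 1)) - 1) := by
  classical
  have hRne : (R : ℝ) ≠ 0 := Nat.cast_ne_zero.2 (by omega)
  have hYL2 : ∀ i r, MemLp (Y i r) 2 μ := fun i r => (hYdist i r).symm.memLp_snd (hXL2 i)
  have hYint : ∀ i r, Integrable (Y i r) μ := fun i r => (hYL2 i r).integrable one_le_two
  set Z : Fin N → Ω → ℝ := fun i ω => (R : ℝ)⁻¹ * ∑ r, Y i r ω with hZdef
  have hZmeas : ∀ i, Measurable (Z i) := fun i =>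
    measurable_const.mul (Finset.measurable_sum _ fun r _ => hYmeas i r)
  have hZL2 : ∀ i, MemLp (Z i) 2 μ := fun i =>
    (memLp_finset_sum _ fun r _ => hYL2 i r).const_mul _
  -- mean of Z i
  have hEZ : ∀ i, ∫ ω, Z i ω ∂μ = ∫ ω, X i ω ∂μ := by
    intro i
    calc ∫ ω, (R : ℝ)⁻¹ * ∑ r, Y i r ω ∂μ
        = (R : ℝ)⁻¹ * ∫ ω, ∑ r, Y i r ω ∂μ := integral_const_mul _ _
      _ = (R : ℝ)⁻¹ * ∑ r, ∫ ω, Y i r ω ∂μ := by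
          rw [integral_finset_sum _ fun r _ => hYint i r]
      _ = (R : ℝ)⁻¹ * ∑ _r : Fin R, ∫ ω, X i ω ∂μ := by
          rw [Finset.sum_congr rfl fun r _ => (hYdist i r).integral_eq]
      _ = ∫ ω, X i ω ∂μ := by
          rw [Finset.sum_const, Finset.card_univ, Fintype.card_fin, nsmul_eq_mul]
          field_simp
  -- variance of Z i
  have hVZ : ∀ i, variance (Z i) μ = variance (X i) μ / R := by
    intro i
    have hpair : Set.Pairwise ↑(univ : Finset (Fin R))
        (fun r r' => IndepFun (Y i r) (Y i r') μ) := by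
      intro r _ r' _ hrr'
      exact hYindep.indepFun (show ((i, r) : Fin N × Fin R) ≠ (i, r') by simp [hrr'])
    have hsum := IndepFun.variance_sum (μ := μ) (X := fun r => Y i r)
      (s := univ) (fun r _ => hYL2 i r) hpair
    have hfun : (fun ω => ∑ r, Y i r ω) = ∑ r : Fin R, Y i r := by
      funext ω; simp
    calc variance (Z i) μ
        = ((R : ℝ)⁻¹) ^ 2 * variance (fun ω => ∑ r, Y i r ω) μ := variance_const_mul _ _ _
      _ = ((R : ℝ)⁻¹) ^ 2 * ∑ r : Fin R, variance (Y i r) μ := by rw [hfun, hsum]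
      _ = ((R : ℝ)⁻¹) ^ 2 * ∑ _r : Fin R, variance (X i) μ := by
          rw [Finset.sum_congr rfl fun r _ => (hYdist i r).variance_eq]
      _ = variance (X i) μ / R := by
          rw [Finset.sum_const, Finset.card_univ, Fintype.card_fin, nsmul_eq_mul]
          field_simp
  -- second moment of Z i
  have hZ2 : ∀ i, ∫ ω, (Z i ω) ^ 2 ∂μ
      = variance (X i) μ / R + (∫ ω, X i ω ∂μ) ^ 2 := by
    intro i
    have h := variance_eq_sub (hZL2 i)
    have h2 : ∫ ω, (Z i ω) ^ 2 ∂μ = variance (Z i) μ + (∫ ω, Z i ω ∂μ) ^ 2 := by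
      rw [h]; simp only [Pi.pow_apply]; ring
    rw [h2, hVZ i, hEZ i]
  -- block product lemma applications
  set g1 : Fin N → (Fin R → ℝ) → ℝ := fun _ v => (R : ℝ)⁻¹ * ∑ r, v r with hg1def
  set g2 : Fin N → (Fin R → ℝ) → ℝ := fun _ v => ((R : ℝ)⁻¹ * ∑ r, v r) ^ 2 with hg2def
  have hg1 : ∀ i, Measurable (g1 i) := fun i =>
    measurable_const.mul (Finset.measurable_sum _ fun r _ => measurable_pi_apply r)
  have hg2 : ∀ i, Measurable (g2 i) := fun i => (hg1 i).pow_const 2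
  have hint1 : ∀ i, Integrable (fun ω => g1 i (fun r => Y i r ω)) μ :=
    fun i => (hZL2 i).integrable one_le_two
  have hint2 : ∀ i, Integrable (fun ω => g2 i (fun r => Y i r ω)) μ :=
    fun i => (hZL2 i).integrable_sq
  have P1 := block_prod μ Y hYmeas hYindep g1 hg1 hint1 univ
  have P2 := block_prod μ Y hYmeas hYindep g2 hg2 hint2 univ
  -- the product is in L²
  have hprodmeas : Measurable (fun ω => ∏ i, Z i ω) :=
    Finset.measurable_prod _ fun i _ => hZmeas i
  have hsq : (fun ω => (∏ i, Z i ω) ^ 2) = (fun ω => ∏ i, g2 i (fun r => Y i r ω)) := by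
    funext ω
    rw [← Finset.prod_pow]
  have hprodL2 : MemLp (fun ω => ∏ i, Z i ω) 2 μ := by
    rw [memLp_two_iff_integrable_sq hprodmeas.aestronglyMeasurable]
    rw [hsq]
    exact P2.1
  -- compute the variance
  have hvar : variance (fun ω => ∏ i, Z i ω) μ
      = ∏ i, (variance (X i) μ / R + (∫ ω, X i ω ∂μ) ^ 2)
        - ∏ i, (∫ ω, X i ω ∂μ) ^ 2 := by
    rw [variance_eq_sub hprodL2]
    have e1 : ∫ ω, ((fun ω => ∏ i, Z i ω) ^ 2) ω ∂μ
        = ∏ i, (variance (X i) μ / R + (∫ ω, X i ω ∂μ) ^ 2) := by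
      simp only [Pi.pow_apply]
      calc ∫ ω, (∏ i, Z i ω) ^ 2 ∂μ
          = ∫ ω, ∏ i, g2 i (fun r => Y i r ω) ∂μ := by rw [← hsq]
        _ = ∏ i, ∫ ω, g2 i (fun r => Y i r ω) ∂μ := P2.2
        _ = ∏ i, (variance (X i) μ / R + (∫ ω, X i ω ∂μ) ^ 2) :=
            Finset.prod_congr rfl fun i _ => hZ2 i
    have e2 : ∫ ω, ∏ i, Z i ω ∂μ = ∏ i, ∫ ω, X i ω ∂μ := by
      calc ∫ ω, ∏ i, Z i ω ∂μ
          = ∏ i, ∫ ω, g1 i (fun r => Y i r ω) ∂μ := P1.2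
        _ = ∏ i, ∫ ω, X i ω ∂μ := Finset.prod_congr rfl fun i _ => hEZ i
    rw [show (μ[(fun ω => ∏ i, Z i ω) ^ 2]) = ∏ i, (variance (X i) μ / R + (∫ ω, X i ω ∂μ) ^ 2) from e1,
      show (μ[fun ω => ∏ i, Z i ω]) = ∏ i, ∫ ω, X i ω ∂μ from e2, ← Finset.prod_pow]
  rw [hvar]
  -- final algebra
  have key : ∏ i, (variance (X i) μ / R + (∫ ω, X i ω ∂μ) ^ 2)
      = (∏ i, (∫ ω, X i ω ∂μ) ^ 2) *
        ∏ i, (variance (X i) μ / (∫ ω, X i ω ∂μ) ^ 2 / (R : ℝ) + 1) := by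
    rw [← Finset.prod_mul_distrib]
    refine Finset.prod_congr rfl fun i _ => ?_
    have hEi := hE i
    field_simp
  rw [key]
  ring
end

section
/- Let N₀ = { i : Eᵢ = 0 } and suppose N₀ is nonempty and not all of {1,…,N}. Then Var(Î_J) = (1/R) · ∏_{i ∈ N₀} Vᵢ · ∏_{i ∉ N₀} (Vᵢ + Eᵢ²) and Var(Î_M) = (1/R^{|N₀|}) · ∏_{i ∈ N₀} Vᵢ · ∏_{i ∉ N₀} (Vᵢ/R + Eᵢ²). -/
open MeasureTheory ProbabilityTheory Finset

section AuxIndep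

variable {Ω : Type*} [MeasurableSpace Ω] {μ : Measure Ω}

lemma iIndepFun_reindex {ι ι' β : Type*} {mβ : MeasurableSpace β}
    (e : ι' ≃ ι) {f : ι → Ω → β}
    (h : iIndepFun f μ) :
    iIndepFun (fun i => f (e i)) μ := by
  rw [iIndepFun_iff_measure_inter_preimage_eq_mul] at h ⊢
  intro S sets hsets
  have h2 := h (S.map e.toEmbedding) (sets := fun i => sets (e.symm i))
    (fun i hi => by
      rw [Finset.mem_map_equiv] at hi
      exact hsets _ hi)
  have h3 : (⋂ j ∈ S.map e.toEmbedding, f j ⁻¹' sets (e.symm j))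
      = ⋂ i ∈ S, f (e i) ⁻¹' sets i := by
    ext ω
    simp only [Set.mem_iInter, Finset.mem_map_equiv, Set.mem_preimage]
    constructor
    · intro H i hi
      have := H (e i) (by simpa using hi)
      simpa using this
    · intro H j hj
      have := H (e.symm j) hj
      simpa using this
  have h4 : (∏ j ∈ S.map e.toEmbedding, μ (f j ⁻¹' sets (e.symm j)))
      = ∏ i ∈ S, μ (f (e i) ⁻¹' sets i) := by
    rw [Finset.prod_map]
    simp
  rw [h3, h4] at h2
  exact h2

lemma indepFun_block_prod {ι κ : Type*} [Fintype κ] [DecidableEq ι]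
    (Y : ι → κ → Ω → ℝ) (hYmeas : ∀ i r, Measurable (Y i r))
    (hYindep : iIndepFun
      (fun p : ι × κ => Y p.1 p.2) μ)
    (g : ι → (κ → ℝ) → ℝ) (hg : ∀ i, Measurable (g i))
    (s : Finset ι) (j : ι) (hj : j ∉ s) :
    IndepFun (fun ω => g j (fun r => Y j r ω))
      (fun ω => ∏ i ∈ s, g i (fun r => Y i r ω)) μ := by
  classical
  have hST : Disjoint (({j} : Finset ι) ×ˢ (Finset.univ : Finset κ))
      (s ×ˢ (Finset.univ : Finset κ)) := by
    rw [Finset.disjoint_left]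
    rintro ⟨a, b⟩ haS haT
    simp only [Finset.mem_product, Finset.mem_singleton] at haS haT
    exact hj (haS.1 ▸ haT.1)
  have hbase := hYindep.indepFun_finset _ _ hST (fun p => hYmeas p.1 p.2)
  set φ : ((({j} : Finset ι) ×ˢ (Finset.univ : Finset κ) : Finset (ι × κ)) → ℝ) → ℝ :=
    fun v => g j (fun r => v ⟨(j, r),
      Finset.mem_product.mpr ⟨Finset.mem_singleton_self j, Finset.mem_univ r⟩⟩) with hφ
  set ψ : ((s ×ˢ (Finset.univ : Finset κ) : Finset (ι × κ)) → ℝ) → ℝ :=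
    fun v => ∏ i ∈ s.attach, g i.1 (fun r => v ⟨(i.1, r),
      Finset.mem_product.mpr ⟨i.2, Finset.mem_univ r⟩⟩) with hψ
  have hφm : Measurable φ :=
    (hg j).comp (measurable_pi_lambda _ fun r => measurable_pi_apply _)
  have hψm : Measurable ψ :=
    Finset.measurable_prod _ fun i _ =>
      (hg i.1).comp (measurable_pi_lambda _ fun r => measurable_pi_apply _)
  have hcomp := hbase.comp hφm hψm
  convert hcomp using 1
  · rfl
  funext a
  simp only [hψ, Function.comp_apply]
  exact (Finset.prod_attach s fun i => g i (fun r => Y i r a)).symm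

lemma integrable_integral_prod_block {ι κ : Type*} [Fintype κ] [DecidableEq ι]
    [IsProbabilityMeasure μ]
    (Y : ι → κ → Ω → ℝ) (hYmeas : ∀ i r, Measurable (Y i r))
    (hYindep : iIndepFun
      (fun p : ι × κ => Y p.1 p.2) μ)
    (g : ι → (κ → ℝ) → ℝ) (hg : ∀ i, Measurable (g i))
    (hint : ∀ i, Integrable (fun ω => g i (fun r => Y i r ω)) μ)
    (s : Finset ι) :
    Integrable (fun ω => ∏ i ∈ s, g i (fun r => Y i r ω)) μ ∧
      (∫ ω, ∏ i ∈ s, g i (fun r => Y i r ω) ∂μ)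
        = ∏ i ∈ s, ∫ ω, g i (fun r => Y i r ω) ∂μ := by
  classical
  induction s using Finset.induction_on with
  | empty => exact ⟨by simpa using integrable_const (1 : ℝ), by simp⟩
  | @insert j s hj ih =>
    have hindep := indepFun_block_prod Y hYmeas hYindep g hg s j hj
    have hmul := hindep.integrable_mul (hint j) ih.1
    constructor
    · have : ((fun ω => g j (fun r => Y j r ω)) *
          (fun ω => ∏ i ∈ s, g i (fun r => Y i r ω)))
          = fun ω => ∏ i ∈ insert j s, g i (fun r => Y i r ω) := by
        funext ω
        simp [Finset.prod_insert hj]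
      rwa [this] at hmul
    · calc (∫ ω, ∏ i ∈ insert j s, g i (fun r => Y i r ω) ∂μ)
          = ∫ ω, (g j fun r => Y j r ω) * ∏ i ∈ s, g i (fun r => Y i r ω) ∂μ := by
            simp only [Finset.prod_insert hj]
        _ = (∫ ω, g j (fun r => Y j r ω) ∂μ) *
            ∫ ω, ∏ i ∈ s, g i (fun r => Y i r ω) ∂μ :=
            hindep.integral_mul_eq_mul_integral (hint j).1 ih.1.1
        _ = ∏ i ∈ insert j s, ∫ ω, g i (fun r => Y i r ω) ∂μ := by
            rw [ih.2, Finset.prod_insert hj]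

lemma variance_eq_integral_sq_sub [IsProbabilityMeasure μ] {f : Ω → ℝ} (hf : MemLp f 2 μ) :
    variance f μ = (∫ ω, f ω ^ 2 ∂μ) - (∫ ω, f ω ∂μ) ^ 2 :=
  variance_eq_sub hf

end AuxIndep

/-- Let `N₀ = {i : Eᵢ = 0}` be nonempty and not all of `{1,…,N}`. Then
`Var(Î_J) = (1/R) ∏_{i∈N₀} Vᵢ ∏_{i∉N₀} (Vᵢ + Eᵢ²)` and
`Var(Î_M) = (1/R^{|N₀|}) ∏_{i∈N₀} Vᵢ ∏_{i∉N₀} (Vᵢ/R + Eᵢ²)`. -/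
theorem variance_estimators_zero_mean_subset
    {Ω : Type*} [MeasurableSpace Ω] (μ : Measure Ω) [IsProbabilityMeasure μ]
    (N R : ℕ) (hN : 1 ≤ N) (hR : 1 ≤ R)
    (X : Fin N → Ω → ℝ)
    (hXmeas : ∀ i, Measurable (X i))
    (hXL2 : ∀ i, MemLp (X i) 2 μ)
    (hXindep : iIndepFun X μ)
    (Y : Fin N → Fin R → Ω → ℝ)
    (hYmeas : ∀ i r, Measurable (Y i r))
    (hYindep : iIndepFun
      (fun p : Fin N × Fin R => Y p.1 p.2) μ)
    (hYdist : ∀ i r, IdentDistrib (Y i r) (X i) μ μ)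
    (N₀ : Finset (Fin N)) (hN₀ : ∀ i, i ∈ N₀ ↔ (∫ ω, X i ω ∂μ) = 0)
    (hne : N₀.Nonempty) (hnuniv : N₀ ≠ Finset.univ) :
    variance (fun ω => (R : ℝ)⁻¹ * ∑ r, ∏ i, Y i r ω) μ
      = (R : ℝ)⁻¹ * (∏ i ∈ N₀, variance (X i) μ) *
          ∏ i ∈ N₀ᶜ, (variance (X i) μ + (∫ ω, X i ω ∂μ) ^ 2)
    ∧ variance (fun ω => ∏ i, ((R : ℝ)⁻¹ * ∑ r, Y i r ω)) μ
      = ((R : ℝ) ^ N₀.card)⁻¹ * (∏ i ∈ N₀, variance (X i) μ) *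
          ∏ i ∈ N₀ᶜ, (variance (X i) μ / (R : ℝ) + (∫ ω, X i ω ∂μ) ^ 2) := by

  classical
  have hRne : (R : ℝ) ≠ 0 := Nat.cast_ne_zero.mpr (by omega)
  have hY2 : ∀ i r, MemLp (Y i r) 2 μ := fun i r => (hYdist i r).symm.memLp_snd (hXL2 i)
  have hYint : ∀ i r, Integrable (Y i r) μ := fun i r => (hY2 i r).integrable one_le_two
  have hYE : ∀ i r, (∫ ω, Y i r ω ∂μ) = ∫ ω, X i ω ∂μ := fun i r => (hYdist i r).integral_eq
  have hYsq : ∀ i r, (∫ ω, Y i r ω ^ 2 ∂μ) = ∫ ω, X i ω ^ 2 ∂μ := fun i r =>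
    ((hYdist i r).comp (measurable_id.pow_const 2)).integral_eq
  have hXsq : ∀ i, (∫ ω, X i ω ^ 2 ∂μ)
      = variance (X i) μ + (∫ ω, X i ω ∂μ) ^ 2 := by
    intro i
    have h := variance_eq_integral_sq_sub (hXL2 i)
    linarith
  have hEzero : (∏ i, ∫ ω, X i ω ∂μ) = 0 := by
    obtain ⟨i0, hi0⟩ := hne
    exact Finset.prod_eq_zero (Finset.mem_univ i0) ((hN₀ i0).1 hi0)
  -- ### Part 1
  have hYrev : iIndepFun
      (fun p : Fin R × Fin N => Y p.2 p.1) μ :=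
    iIndepFun_reindex (Equiv.prodComm (Fin R) (Fin N)) hYindep
  have hgP : Measurable (fun v : Fin N → ℝ => ∏ i, v i) :=
    Finset.measurable_prod _ fun i _ => measurable_pi_apply i
  have hPpair : ∀ r r' : Fin R, r ≠ r' →
      IndepFun (fun ω => ∏ i, Y i r ω) (fun ω => ∏ i, Y i r' ω) μ := by
    intro r r' hrr'
    have h := indepFun_block_prod (fun r i => Y i r) (fun r i => hYmeas i r) hYrev
      (fun _ => fun v : Fin N → ℝ => ∏ i, v i) (fun _ => hgP)
      {r'} r (by simp [hrr'])
    simpa using h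
  have hPint2 : ∀ r, Integrable (fun ω => ∏ i, Y i r ω ^ 2) μ ∧
      (∫ ω, ∏ i, Y i r ω ^ 2 ∂μ) = ∏ i, ∫ ω, Y i r ω ^ 2 ∂μ := fun r =>
    integrable_integral_prod_block Y hYmeas hYindep
      (fun _ => fun v : Fin R → ℝ => (v r) ^ 2)
      (fun _ => (measurable_pi_apply r).pow_const 2)
      (fun i => (hY2 i r).integrable_sq) Finset.univ
  have hPint1 : ∀ r, Integrable (fun ω => ∏ i, Y i r ω) μ ∧
      (∫ ω, ∏ i, Y i r ω ∂μ) = ∏ i, ∫ ω, Y i r ω ∂μ := fun r =>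
    integrable_integral_prod_block Y hYmeas hYindep
      (fun _ => fun v : Fin R → ℝ => v r)
      (fun _ => measurable_pi_apply r)
      (fun i => hYint i r) Finset.univ
  have hPsq_eq : ∀ r, ((fun ω => ∏ i, Y i r ω) ^ 2) = fun ω => ∏ i, Y i r ω ^ 2 := by
    intro r
    funext ω
    simp [← Finset.prod_pow]
  have hPmem : ∀ r, MemLp (fun ω => ∏ i, Y i r ω) 2 μ := by
    intro r
    have hm : Measurable fun ω => ∏ i, Y i r ω :=
      Finset.measurable_prod _ fun i _ => hYmeas i r
    rw [memLp_two_iff_integrable_sq hm.aestronglyMeasurable]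
    have he : (fun x => (∏ i, Y i r x) ^ 2) = fun x => ∏ i, Y i r x ^ 2 := by
      funext x; rw [← Finset.prod_pow]
    rw [he]
    exact (hPint2 r).1
  have hPvar : ∀ r, variance (fun ω => ∏ i, Y i r ω) μ
      = ∏ i, (variance (X i) μ + (∫ ω, X i ω ∂μ) ^ 2) := by
    intro r
    have h1 : (∫ ω, (∏ i, Y i r ω) ^ 2 ∂μ)
        = ∏ i, (variance (X i) μ + (∫ ω, X i ω ∂μ) ^ 2) := by
      have he : (fun ω => (∏ i, Y i r ω) ^ 2) = fun ω => ∏ i, Y i r ω ^ 2 := by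
        funext ω; simp [← Finset.prod_pow]
      rw [he, (hPint2 r).2]
      exact Finset.prod_congr rfl fun i _ => by rw [hYsq i r, hXsq i]
    have h2 : (∫ ω, ∏ i, Y i r ω ∂μ) = 0 := by
      rw [(hPint1 r).2, Finset.prod_congr rfl fun i _ => hYE i r]
      exact hEzero
    rw [variance_eq_integral_sq_sub (hPmem r), h1, h2]
    ring
  have part1 : variance (fun ω => (R : ℝ)⁻¹ * ∑ r, ∏ i, Y i r ω) μ
      = (R : ℝ)⁻¹ * (∏ i ∈ N₀, variance (X i) μ) *
          ∏ i ∈ N₀ᶜ, (variance (X i) μ + (∫ ω, X i ω ∂μ) ^ 2) := by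
    have hvar1 : variance (fun ω => (R : ℝ)⁻¹ * ∑ r, ∏ i, Y i r ω) μ
        = (R : ℝ)⁻¹ ^ 2 * variance (fun ω => ∑ r, ∏ i, Y i r ω) μ :=
      variance_const_mul _ _ μ
    have hsum_apply : (fun ω => ∑ r, ∏ i, Y i r ω)
        = ∑ r, (fun ω => ∏ i, Y i r ω) := by
      funext ω; rw [Finset.sum_apply]
    have hvarsum : variance (fun ω => ∑ r, ∏ i, Y i r ω) μ
        = ∑ r : Fin R, variance (fun ω => ∏ i, Y i r ω) μ := by
      rw [hsum_apply]
      exact IndepFun.variance_sum (fun r _ => hPmem r) (fun r _ r' hr' h => hPpair r r' h)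
    have hsumconst : (∑ r : Fin R, variance (fun ω => ∏ i, Y i r ω) μ)
        = (R : ℝ) * ∏ i, (variance (X i) μ + (∫ ω, X i ω ∂μ) ^ 2) := by
      rw [Finset.sum_congr rfl fun r _ => hPvar r, Finset.sum_const]
      simp [Finset.card_univ, nsmul_eq_mul]
    have hsplit : (∏ i, (variance (X i) μ + (∫ ω, X i ω ∂μ) ^ 2))
        = (∏ i ∈ N₀, variance (X i) μ) *
          ∏ i ∈ N₀ᶜ, (variance (X i) μ + (∫ ω, X i ω ∂μ) ^ 2) := by
      rw [← Finset.prod_mul_prod_compl N₀]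
      congr 1
      exact Finset.prod_congr rfl fun i hi => by rw [(hN₀ i).1 hi]; ring
    rw [hvar1, hvarsum, hsumconst, hsplit]
    field_simp
  -- ### Part 2
  have hMmem : ∀ i, MemLp (fun ω => (R : ℝ)⁻¹ * ∑ r, Y i r ω) 2 μ := fun i =>
    (memLp_finset_sum Finset.univ (fun r _ => hY2 i r)).const_mul _
  have hME : ∀ i, (∫ ω, (R : ℝ)⁻¹ * ∑ r, Y i r ω ∂μ) = ∫ ω, X i ω ∂μ := by
    intro i
    rw [integral_const_mul, integral_finset_sum _ (fun r _ => hYint i r),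
      Finset.sum_congr rfl fun r _ => hYE i r, Finset.sum_const]
    simp [Finset.card_univ, nsmul_eq_mul]
    field_simp
  have hMvar : ∀ i, variance (fun ω => (R : ℝ)⁻¹ * ∑ r, Y i r ω) μ
      = variance (X i) μ / (R : ℝ) := by
    intro i
    have h1 : variance (fun ω => (R : ℝ)⁻¹ * ∑ r, Y i r ω) μ
        = (R : ℝ)⁻¹ ^ 2 * variance (fun ω => ∑ r, Y i r ω) μ := variance_const_mul _ _ μ
    have h2 : variance (fun ω => ∑ r, Y i r ω) μ
        = ∑ r : Fin R, variance (Y i r) μ := by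
      rw [show (fun ω => ∑ r, Y i r ω) = ∑ r, Y i r from
        funext fun ω => (Finset.sum_apply _ _ _).symm]
      exact IndepFun.variance_sum (fun r _ => hY2 i r)
        (fun r _ r' _ h => hYindep.indepFun
          (show ((i, r) : Fin N × Fin R) ≠ (i, r') by simp [Prod.ext_iff, h]))
    have h3 : (∑ r : Fin R, variance (Y i r) μ) = (R : ℝ) * variance (X i) μ := by
      rw [Finset.sum_congr rfl fun r _ => (hYdist i r).variance_eq, Finset.sum_const]
      simp [Finset.card_univ, nsmul_eq_mul]
    rw [h1, h2, h3]
    field_simp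
  have hMsqI : ∀ i, (∫ ω, ((R : ℝ)⁻¹ * ∑ r, Y i r ω) ^ 2 ∂μ)
      = variance (X i) μ / (R : ℝ) + (∫ ω, X i ω ∂μ) ^ 2 := by
    intro i
    have hv := variance_eq_integral_sq_sub (hMmem i)
    rw [hMvar i, hME i] at hv
    linarith
  have hgM : ∀ i : Fin N, Measurable (fun v : Fin R → ℝ => (R : ℝ)⁻¹ * ∑ r, v r) :=
    fun _ => (Finset.measurable_sum _ fun r _ => measurable_pi_apply r).const_mul _
  have hMprod : Integrable (fun ω => ∏ i, ((R : ℝ)⁻¹ * ∑ r, Y i r ω)) μ ∧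
      (∫ ω, ∏ i, ((R : ℝ)⁻¹ * ∑ r, Y i r ω) ∂μ)
        = ∏ i, ∫ ω, (R : ℝ)⁻¹ * ∑ r, Y i r ω ∂μ :=
    integrable_integral_prod_block Y hYmeas hYindep
      (fun _ => fun v : Fin R → ℝ => (R : ℝ)⁻¹ * ∑ r, v r) hgM
      (fun i => (hMmem i).integrable one_le_two) Finset.univ
  have hMprodsq : Integrable (fun ω => ∏ i, ((R : ℝ)⁻¹ * ∑ r, Y i r ω) ^ 2) μ ∧
      (∫ ω, ∏ i, ((R : ℝ)⁻¹ * ∑ r, Y i r ω) ^ 2 ∂μ)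
        = ∏ i, ∫ ω, ((R : ℝ)⁻¹ * ∑ r, Y i r ω) ^ 2 ∂μ :=
    integrable_integral_prod_block Y hYmeas hYindep
      (fun _ => fun v : Fin R → ℝ => ((R : ℝ)⁻¹ * ∑ r, v r) ^ 2)
      (fun i => (hgM i).pow_const 2)
      (fun i => (hMmem i).integrable_sq) Finset.univ
  have hProdMem : MemLp (fun ω => ∏ i, ((R : ℝ)⁻¹ * ∑ r, Y i r ω)) 2 μ := by
    have hm : Measurable fun ω => ∏ i, ((R : ℝ)⁻¹ * ∑ r, Y i r ω) :=
      Finset.measurable_prod _ fun i _ =>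
        (Finset.measurable_sum _ fun r _ => hYmeas i r).const_mul _
    rw [memLp_two_iff_integrable_sq hm.aestronglyMeasurable]
    have he : (fun x => (∏ i, ((R : ℝ)⁻¹ * ∑ r, Y i r x)) ^ 2)
        = fun x => ∏ i, ((R : ℝ)⁻¹ * ∑ r, Y i r x) ^ 2 := by
      funext x; rw [← Finset.prod_pow]
    rw [he]
    exact hMprodsq.1
  have part2 : variance (fun ω => ∏ i, ((R : ℝ)⁻¹ * ∑ r, Y i r ω)) μ
      = ((R : ℝ) ^ N₀.card)⁻¹ * (∏ i ∈ N₀, variance (X i) μ) *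
          ∏ i ∈ N₀ᶜ, (variance (X i) μ / (R : ℝ) + (∫ ω, X i ω ∂μ) ^ 2) := by
    have h1 : (∫ ω, (∏ i, ((R : ℝ)⁻¹ * ∑ r, Y i r ω)) ^ 2 ∂μ)
        = ∏ i, (variance (X i) μ / (R : ℝ) + (∫ ω, X i ω ∂μ) ^ 2) := by
      have he : (fun ω => (∏ i, ((R : ℝ)⁻¹ * ∑ r, Y i r ω)) ^ 2)
          = fun ω => ∏ i, ((R : ℝ)⁻¹ * ∑ r, Y i r ω) ^ 2 := by
        funext ω; simp [← Finset.prod_pow]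
      rw [he, hMprodsq.2]
      exact Finset.prod_congr rfl fun i _ => hMsqI i
    have h2 : (∫ ω, ∏ i, ((R : ℝ)⁻¹ * ∑ r, Y i r ω) ∂μ) = 0 := by
      rw [hMprod.2, Finset.prod_congr rfl fun i _ => hME i]
      exact hEzero
    have hsplit : (∏ i, (variance (X i) μ / (R : ℝ) + (∫ ω, X i ω ∂μ) ^ 2))
        = ((∏ i ∈ N₀, variance (X i) μ) / (R : ℝ) ^ N₀.card) *
          ∏ i ∈ N₀ᶜ, (variance (X i) μ / (R : ℝ) + (∫ ω, X i ω ∂μ) ^ 2) := by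
      rw [← Finset.prod_mul_prod_compl N₀]
      congr 1
      rw [Finset.prod_congr rfl (fun i hi => by rw [(hN₀ i).1 hi]; ring :
        ∀ i ∈ N₀, (variance (X i) μ / (R : ℝ) + (∫ ω, X i ω ∂μ) ^ 2)
          = variance (X i) μ / (R : ℝ)),
        Finset.prod_div_distrib, Finset.prod_const]
    rw [variance_eq_integral_sq_sub hProdMem, h1, h2, hsplit]
    field_simp
    try ring
  exact ⟨part1, part2⟩
end

section
/- Suppose Eᵢ = 0 for every i = 1,…,N and Vᵢ > 0 for every i. Let Î_J be the joint estimator computed with R_J ≥ 1 replications and Î_M the marginal estimator computed with R_M ≥ 1 replications. Then Var(Î_J) = Var(Î_M) if and only if R_J = R_M^N. -/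
open MeasureTheory ProbabilityTheory Finset

lemma MeasureTheory.MemLp.variance_eq_of_integral_eq_zero {Ω : Type*} [MeasurableSpace Ω]
    {μ : Measure Ω} {X : Ω → ℝ} (hX : MemLp X 2 μ) (hXint : μ[X] = 0) :
    variance X μ = μ[X ^ (2:ℕ)] := by
  rw [variance_of_integral_eq_zero hX.aestronglyMeasurable.aemeasurable hXint]; rfl

lemma aux_indepFun_prod_blocks {Ω : Type*} [MeasurableSpace Ω] {μ : Measure Ω}
    {ι κ : Type*} [DecidableEq ι] [DecidableEq κ]
    {f : ι → Ω → ℝ} (hf : iIndepFun (m := fun _ => Real.measurableSpace) f μ)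
    (hfm : ∀ i, Measurable (f i))
    (B : κ → Finset ι) (hB : ∀ k l, k ≠ l → Disjoint (B k) (B l))
    (φ : ∀ k, ({x // x ∈ B k} → ℝ) → ℝ) (hφ : ∀ k, Measurable (φ k))
    (g : κ → Ω → ℝ) (hg : ∀ k, g k = fun ω => φ k (fun p => f p ω))
    (s : Finset κ) {j : κ} (hj : j ∉ s) :
    IndepFun (fun ω => ∏ k ∈ s, g k ω) (g j) μ := by
  classical
  set S : Finset ι := s.biUnion B with hS
  have hST : Disjoint S (B j) := by
    rw [hS, Finset.disjoint_biUnion_left]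
    intro k hk
    exact hB k j (fun h => hj (h ▸ hk))
  have base := hf.indepFun_finset S (B j) hST hfm
  set Φ : ({x // x ∈ S} → ℝ) → ℝ := fun v =>
    ∏ k ∈ s.attach, φ k.1 (fun p => v ⟨p.1, Finset.mem_biUnion.2 ⟨k.1, k.2, p.2⟩⟩) with hΦdef
  have hΦ : Measurable Φ := by
    apply Finset.measurable_prod
    intro k _
    exact (hφ k.1).comp (measurable_pi_lambda _ fun p => measurable_pi_apply _)
  have key := base.comp hΦ (hφ j)
  have h2 : (fun ω => ∏ k ∈ s, g k ω) = Φ ∘ (fun a (i : {x // x ∈ S}) => f i a) := by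
    funext ω
    rw [Function.comp_apply, hΦdef]
    rw [← Finset.prod_attach s (fun k => g k ω)]
    refine Finset.prod_congr rfl fun k _ => ?_
    rw [hg k.1]
  have h3 : g j = (φ j) ∘ (fun a (i : {x // x ∈ B j}) => f i a) := by
    funext ω
    rw [hg j]
    rfl
  rw [h2, h3]
  exact key

lemma aux_integral_prod_blocks {Ω : Type*} [MeasurableSpace Ω] {μ : Measure Ω}
    [IsProbabilityMeasure μ]
    {ι κ : Type*} [DecidableEq ι] [DecidableEq κ]
    {f : ι → Ω → ℝ} (hf : iIndepFun (m := fun _ => Real.measurableSpace) f μ)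
    (hfm : ∀ i, Measurable (f i))
    (B : κ → Finset ι) (hB : ∀ k l, k ≠ l → Disjoint (B k) (B l))
    (φ : ∀ k, ({x // x ∈ B k} → ℝ) → ℝ) (hφ : ∀ k, Measurable (φ k))
    (g : κ → Ω → ℝ) (hg : ∀ k, g k = fun ω => φ k (fun p => f p ω))
    (hgi : ∀ k, Integrable (g k) μ) (s : Finset κ) :
    Integrable (fun ω => ∏ k ∈ s, g k ω) μ ∧
      (∫ ω, ∏ k ∈ s, g k ω ∂μ) = ∏ k ∈ s, ∫ ω, g k ω ∂μ := by
  classical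
  induction s using Finset.induction_on with
  | empty => exact ⟨by simpa using (integrable_const (1:ℝ)), by simp⟩
  | @insert j s hj ih =>
    have hind := (aux_indepFun_prod_blocks hf hfm B hB φ hφ g hg s hj).symm
    have hmul : Integrable ((g j) * (fun ω => ∏ k ∈ s, g k ω)) μ :=
      hind.integrable_mul (hgi j) ih.1
    have heq : (fun ω => ∏ k ∈ insert j s, g k ω)
        = (g j) * (fun ω => ∏ k ∈ s, g k ω) := by
      funext ω; simp [Finset.prod_insert hj]
    constructor
    · rw [heq]; exact hmul
    · calc (∫ ω, ∏ k ∈ insert j s, g k ω ∂μ)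
          = ∫ ω, ((g j) * (fun ω' => ∏ k ∈ s, g k ω')) ω ∂μ := by rw [heq]
        _ = (∫ ω, g j ω ∂μ) * ∫ ω, ∏ k ∈ s, g k ω ∂μ :=
            hind.integral_mul_eq_mul_integral (hgi j).aestronglyMeasurable ih.1.aestronglyMeasurable
        _ = ∏ k ∈ insert j s, ∫ ω, g k ω ∂μ := by
            rw [ih.2, Finset.prod_insert hj]

/-- If all means are zero and all variances are positive, and the joint
estimator uses `R_J` replications while the marginal estimator uses `R_M` replications,
then `Var(Î_J) = Var(Î_M)` if and only if `R_J = R_M ^ N`. -/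
theorem variance_joint_eq_marginal_iff_zero_means
    {Ω : Type*} [MeasurableSpace Ω] (μ : Measure Ω) [IsProbabilityMeasure μ]
    (N RJ RM : ℕ) (hN : 1 ≤ N) (hRJ : 1 ≤ RJ) (hRM : 1 ≤ RM)
    (X : Fin N → Ω → ℝ)
    (hXmeas : ∀ i, Measurable (X i))
    (hXL2 : ∀ i, MemLp (X i) 2 μ)
    (hXindep : iIndepFun (m := fun _ => Real.measurableSpace) X μ)
    (YJ : Fin N → Fin RJ → Ω → ℝ)
    (hYJmeas : ∀ i r, Measurable (YJ i r))
    (hYJindep : iIndepFun (m := fun _ => Real.measurableSpace)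
      (fun p : Fin N × Fin RJ => YJ p.1 p.2) μ)
    (hYJdist : ∀ i r, IdentDistrib (YJ i r) (X i) μ μ)
    (YM : Fin N → Fin RM → Ω → ℝ)
    (hYMmeas : ∀ i r, Measurable (YM i r))
    (hYMindep : iIndepFun (m := fun _ => Real.measurableSpace)
      (fun p : Fin N × Fin RM => YM p.1 p.2) μ)
    (hYMdist : ∀ i r, IdentDistrib (YM i r) (X i) μ μ)
    (hE : ∀ i, (∫ ω, X i ω ∂μ) = 0)
    (hV : ∀ i, 0 < variance (X i) μ) :
    variance (fun ω => (RJ : ℝ)⁻¹ * ∑ r, ∏ i, YJ i r ω) μ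
      = variance (fun ω => ∏ i, ((RM : ℝ)⁻¹ * ∑ r, YM i r ω)) μ
    ↔ RJ = RM ^ N := by
  classical
  have i0 : Fin N := ⟨0, hN⟩
  set V : ℝ := ∏ i, variance (X i) μ with hVdef
  have hVpos : 0 < V := Finset.prod_pos fun i _ => hV i
  have hXsq : ∀ i, (∫ ω, (X i ω)^2 ∂μ) = variance (X i) μ := by
    intro i
    rw [(hXL2 i).variance_eq_of_integral_eq_zero (hE i)]
    rfl
  -- moments of the joint replications
  have hfJm : ∀ p : Fin N × Fin RJ, Measurable (fun ω => YJ p.1 p.2 ω) :=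
    fun p => hYJmeas p.1 p.2
  have hYJL2 : ∀ i r, MemLp (YJ i r) 2 μ := fun i r =>
    (hYJdist i r).symm.memLp_snd (hXL2 i)
  have hYJE : ∀ i r, (∫ ω, YJ i r ω ∂μ) = 0 := fun i r =>
    ((hYJdist i r).integral_eq).trans (hE i)
  have hYJsq : ∀ i r, (∫ ω, (YJ i r ω)^2 ∂μ) = variance (X i) μ := by
    intro i r
    have h := ((hYJdist i r).comp (measurable_id.pow_const 2)).integral_eq
    calc (∫ ω, (YJ i r ω)^2 ∂μ) = ∫ ω, (X i ω)^2 ∂μ := by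
          simpa [Function.comp] using h
      _ = variance (X i) μ := hXsq i
  -- the Z_r = ∏ i, YJ i r
  have hZi : ∀ r : Fin RJ, Integrable (fun ω => ∏ i, YJ i r ω) μ ∧
      (∫ ω, ∏ i, YJ i r ω ∂μ) = ∏ i, ∫ ω, YJ i r ω ∂μ := by
    intro r
    exact aux_integral_prod_blocks hYJindep hfJm (fun i : Fin N => {(i, r)})
      (fun i i' hii' => Finset.disjoint_singleton.2 (by simp [Prod.ext_iff, hii']))
      (fun i => fun v => v ⟨(i, r), Finset.mem_singleton_self _⟩)
      (fun i => measurable_pi_apply _)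
      (fun i => YJ i r) (fun i => rfl)
      (fun i => (hYJL2 i r).integrable one_le_two) univ
  have hZsq : ∀ r : Fin RJ, Integrable (fun ω => ∏ i, (YJ i r ω)^2) μ ∧
      (∫ ω, ∏ i, (YJ i r ω)^2 ∂μ) = ∏ i, ∫ ω, (YJ i r ω)^2 ∂μ := by
    intro r
    exact aux_integral_prod_blocks hYJindep hfJm (fun i : Fin N => {(i, r)})
      (fun i i' hii' => Finset.disjoint_singleton.2 (by simp [Prod.ext_iff, hii']))
      (fun i => fun v => (v ⟨(i, r), Finset.mem_singleton_self _⟩)^2)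
      (fun i => (measurable_pi_apply _).pow_const 2)
      (fun i => fun ω => (YJ i r ω)^2) (fun i => rfl)
      (fun i => (hYJL2 i r).integrable_sq) univ
  have hZmeas : ∀ r, Measurable (fun ω => ∏ i, YJ i r ω) :=
    fun r => Finset.measurable_prod _ fun i _ => hYJmeas i r
  have hZsqfun : ∀ r : Fin RJ,
      ((fun ω => ∏ i, YJ i r ω) ^ (2:ℕ)) = fun ω => ∏ i, (YJ i r ω)^2 := by
    intro r; funext ω; simp [Finset.prod_pow]
  have hZL2 : ∀ r, MemLp (fun ω => ∏ i, YJ i r ω) 2 μ := by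
    intro r
    refine (memLp_two_iff_integrable_sq (hZmeas r).aestronglyMeasurable).2 ?_
    have h : (fun ω => (∏ i, YJ i r ω)^2) = fun ω => ∏ i, (YJ i r ω)^2 := by
      funext ω; rw [Finset.prod_pow]
    rw [h]; exact (hZsq r).1
  have hZE : ∀ r, (∫ ω, ∏ i, YJ i r ω ∂μ) = 0 := by
    intro r
    rw [(hZi r).2]
    exact Finset.prod_eq_zero (Finset.mem_univ i0) (hYJE i0 r)
  have hZvar : ∀ r, variance (fun ω => ∏ i, YJ i r ω) μ = V := by
    intro r
    rw [(hZL2 r).variance_eq_of_integral_eq_zero (hZE r), hZsqfun r, (hZsq r).2, hVdef]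
    exact Finset.prod_congr rfl fun i _ => hYJsq i r
  have hZindep : ∀ r r' : Fin RJ, r ≠ r' →
      IndepFun (fun ω => ∏ i, YJ i r ω) (fun ω => ∏ i, YJ i r' ω) μ := by
    intro r r' hrr'
    have h := aux_indepFun_prod_blocks hYJindep hfJm
      (fun t : Fin RJ => (Finset.univ : Finset (Fin N)) ×ˢ {t})
      (fun t t' htt' => by
        simp only [Finset.disjoint_left, Finset.mem_product, Finset.mem_singleton]
        rintro ⟨i, u⟩ ⟨-, h1⟩ ⟨-, h2⟩
        exact htt' (by rw [← h1, h2]))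
      (fun t => fun v => ∏ i, v ⟨(i, t),
        Finset.mem_product.2 ⟨Finset.mem_univ i, Finset.mem_singleton_self t⟩⟩)
      (fun t => Finset.measurable_prod _ fun i _ => measurable_pi_apply _)
      (fun t => fun ω => ∏ i, YJ i t ω) (fun t => rfl)
      ({r'} : Finset (Fin RJ)) (j := r) (by simp [hrr'])
    have h2 := h.symm
    simpa using h2
  have hsum : variance (fun ω => ∑ r, ∏ i, YJ i r ω) μ = RJ * V := by
    have h := IndepFun.variance_sum (μ := μ)
      (X := fun r => fun ω => ∏ i, YJ i r ω) (s := univ)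
      (fun r _ => hZL2 r) (fun r _ r' _ hrr' => hZindep r r' hrr')
    have he : (∑ r : Fin RJ, (fun ω => ∏ i, YJ i r ω)) = fun ω => ∑ r, ∏ i, YJ i r ω := by
      funext ω; simp
    rw [he] at h
    rw [h]
    simp [hZvar, Finset.card_univ]
  have hRJ0 : (RJ : ℝ) ≠ 0 := Nat.cast_ne_zero.2 (by omega)
  have hVarJ : variance (fun ω => (RJ : ℝ)⁻¹ * ∑ r, ∏ i, YJ i r ω) μ = V / RJ := by
    rw [variance_const_mul ((RJ : ℝ)⁻¹) (fun ω => ∑ r, ∏ i, YJ i r ω) μ, hsum]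
    field_simp
  -- marginal side
  have hfMm : ∀ p : Fin N × Fin RM, Measurable (fun ω => YM p.1 p.2 ω) :=
    fun p => hYMmeas p.1 p.2
  have hYML2 : ∀ i r, MemLp (YM i r) 2 μ := fun i r =>
    (hYMdist i r).symm.memLp_snd (hXL2 i)
  have hYME : ∀ i r, (∫ ω, YM i r ω ∂μ) = 0 := fun i r =>
    ((hYMdist i r).integral_eq).trans (hE i)
  have hRM0 : (RM : ℝ) ≠ 0 := Nat.cast_ne_zero.2 (by omega)
  set g : Fin N → Ω → ℝ := fun i ω => (RM : ℝ)⁻¹ * ∑ r, YM i r ω with hgdef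
  have hgmeas : ∀ i, Measurable (g i) :=
    fun i => (Finset.measurable_sum _ fun r _ => hYMmeas i r).const_mul _
  have hgL2 : ∀ i, MemLp (g i) 2 μ := by
    intro i
    have h : MemLp (fun ω => ∑ r, YM i r ω) 2 μ := by
      have h0 := memLp_finset_sum' (μ := μ) univ (fun r (_ : r ∈ univ) => hYML2 i r)
      have h2 : (∑ r : Fin RM, YM i r) = fun ω => ∑ r, YM i r ω := by funext ω; simp
      rwa [h2] at h0
    exact h.const_mul _
  have hgE : ∀ i, (∫ ω, g i ω ∂μ) = 0 := by
    intro i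
    show (∫ ω, (RM : ℝ)⁻¹ * ∑ r, YM i r ω ∂μ) = 0
    rw [integral_const_mul, integral_finset_sum _
      (fun r _ => (hYML2 i r).integrable one_le_two)]
    simp [hYME]
  have hSsum : ∀ i, variance (fun ω => ∑ r, YM i r ω) μ = RM * variance (X i) μ := by
    intro i
    have h := IndepFun.variance_sum (μ := μ) (X := fun r => YM i r) (s := univ)
      (fun r _ => hYML2 i r)
      (fun r _ r' _ hrr' => hYMindep.indepFun
        (show ((i, r) : Fin N × Fin RM) ≠ (i, r') by simp [hrr']))
    have he : (∑ r : Fin RM, YM i r) = fun ω => ∑ r, YM i r ω := by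
      funext ω; simp
    rw [he] at h
    rw [h]
    have : ∀ r : Fin RM, variance (YM i r) μ = variance (X i) μ :=
      fun r => (hYMdist i r).variance_eq
    simp [this, Finset.card_univ, mul_comm]
  have hgvar : ∀ i, variance (g i) μ = variance (X i) μ / RM := by
    intro i
    rw [hgdef]
    rw [variance_const_mul ((RM : ℝ)⁻¹) (fun ω => ∑ r, YM i r ω) μ, hSsum i]
    field_simp
  have hgsq : ∀ i, (∫ ω, (g i ω)^2 ∂μ) = variance (X i) μ / RM := by
    intro i
    calc (∫ ω, (g i ω)^2 ∂μ) = variance (g i) μ :=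
          ((hgL2 i).variance_eq_of_integral_eq_zero (hgE i)).symm
      _ = variance (X i) μ / RM := hgvar i
  have hBM : ∀ (k l : Fin N), k ≠ l →
      Disjoint (({k} : Finset (Fin N)) ×ˢ (univ : Finset (Fin RM))) ({l} ×ˢ univ) := by
    intro k l hkl
    simp only [Finset.disjoint_left, Finset.mem_product, Finset.mem_singleton]
    rintro ⟨i, u⟩ ⟨h1, -⟩ ⟨h2, -⟩
    exact hkl (by rw [← h1, h2])
  have hMi := aux_integral_prod_blocks hYMindep hfMm
    (fun i : Fin N => ({i} : Finset (Fin N)) ×ˢ (univ : Finset (Fin RM))) hBM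
    (fun i => fun v => (RM : ℝ)⁻¹ * ∑ r, v ⟨(i, r),
      Finset.mem_product.2 ⟨Finset.mem_singleton_self i, Finset.mem_univ r⟩⟩)
    (fun i => by fun_prop)
    g (fun i => rfl) (fun i => (hgL2 i).integrable one_le_two) univ
  have hMsq := aux_integral_prod_blocks hYMindep hfMm
    (fun i : Fin N => ({i} : Finset (Fin N)) ×ˢ (univ : Finset (Fin RM))) hBM
    (fun i => fun v => ((RM : ℝ)⁻¹ * ∑ r, v ⟨(i, r),
      Finset.mem_product.2 ⟨Finset.mem_singleton_self i, Finset.mem_univ r⟩⟩)^2)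
    (fun i => by fun_prop)
    (fun i => fun ω => (g i ω)^2) (fun i => rfl)
    (fun i => (hgL2 i).integrable_sq) univ
  have hPMmeas : Measurable (fun ω => ∏ i, g i ω) :=
    Finset.measurable_prod _ fun i _ => hgmeas i
  have hPME : (∫ ω, ∏ i, g i ω ∂μ) = 0 := by
    rw [hMi.2]
    exact Finset.prod_eq_zero (Finset.mem_univ i0) (hgE i0)
  have hPML2 : MemLp (fun ω => ∏ i, g i ω) 2 μ := by
    refine (memLp_two_iff_integrable_sq hPMmeas.aestronglyMeasurable).2 ?_
    have h : (fun ω => (∏ i, g i ω)^2) = fun ω => ∏ i, (g i ω)^2 := by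
      funext ω; rw [Finset.prod_pow]
    rw [h]; exact hMsq.1
  have hVarM : variance (fun ω => ∏ i, g i ω) μ = V / RM ^ N := by
    rw [hPML2.variance_eq_of_integral_eq_zero hPME]
    have h : ((fun ω => ∏ i, g i ω) ^ (2:ℕ)) = fun ω => ∏ i, (g i ω)^2 := by
      funext ω; simp [Finset.prod_pow]
    rw [h, hMsq.2]
    calc (∏ i, ∫ ω, (g i ω)^2 ∂μ) = ∏ i, variance (X i) μ / RM :=
          Finset.prod_congr rfl fun i _ => hgsq i
      _ = V / RM ^ N := by
          rw [Finset.prod_div_distrib, Finset.prod_const, Finset.card_univ,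
            Fintype.card_fin, hVdef]
  have hgoal : (fun ω => ∏ i, ((RM : ℝ)⁻¹ * ∑ r, YM i r ω)) = fun ω => ∏ i, g i ω := rfl
  rw [hVarJ, hgoal, hVarM]
  have hRJpos : (0 : ℝ) < RJ := by exact_mod_cast Nat.lt_of_lt_of_le Nat.zero_lt_one hRJ
  have hRMNpos : (0 : ℝ) < (RM : ℝ) ^ N :=
    pow_pos (by exact_mod_cast Nat.lt_of_lt_of_le Nat.zero_lt_one hRM) N
  constructor
  · intro h
    rw [div_eq_div_iff hRJpos.ne' hRMNpos.ne'] at h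
    have h2 : (RM : ℝ) ^ N = (RJ : ℝ) := mul_left_cancel₀ (ne_of_gt hVpos) h
    exact_mod_cast h2.symm
  · intro h
    rw [h]
    push_cast
    ring
end

section
/- Let 𝒢 be a sub-σ-algebra of the probability space and let φ₁,…,φ_N be bounded real random variables that are mutually conditionally independent given 𝒢, with conditional variance Var(φᵢ | 𝒢) = E[φᵢ² | 𝒢] − (E[φᵢ | 𝒢])². Then the (unconditional) variance of the product decomposes as Var( ∏_{i=1}^N φᵢ ) = Var( ∏_{i=1}^N E[φᵢ | 𝒢] ) + Σ_{∅ ≠ C ⊆ {1,…,N}} E[ ∏_{i ∈ C} Var(φᵢ | 𝒢) · ∏_{j ∉ C} E[φⱼ | 𝒢]² ]. In particular, the joint Monte Carlo estimator Î_J = (1/R) Σ_{r=1}^R ∏_{i=1}^N φᵢ^{(r)} built from R i.i.d. copies of (φ₁,…,φ_N) has variance equal to 1/R times this quantity. -/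
open MeasureTheory ProbabilityTheory Finset

lemma aux_integral_prod_s16 {Ω : Type*} {mΩ : MeasurableSpace Ω} {ν : Measure Ω}
    [IsProbabilityMeasure ν] {N : ℕ} {g : Fin N → Ω → ℝ} (hg : ∀ i, Measurable (g i))
    (hind : iIndepFun (m := fun _ => Real.measurableSpace) g ν) (s : Finset (Fin N)) :
    ∫ ω, ∏ i ∈ s, g i ω ∂ν = ∏ i ∈ s, ∫ ω, g i ω ∂ν := by
  classical
  induction s using Finset.induction_on with
  | empty => simp
  | @insert a s hi' ih =>
    have hIF : IndepFun (∏ j ∈ s, g j) (g a) ν :=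
      hind.indepFun_finsetProd_of_notMem hg hi'
    have hprod : (fun ω => ∏ j ∈ s, g j ω) = (∏ j ∈ s, g j) := by
      ext ω; simp [Finset.prod_apply]
    have := hIF.symm.integral_mul_eq_mul_integral (hg a).aestronglyMeasurable
      (by rw [← hprod]; exact (Finset.measurable_prod s fun j _ => hg j).aestronglyMeasurable)
    simp only [Finset.prod_insert hi']
    calc ∫ ω, g a ω * ∏ j ∈ s, g j ω ∂ν
        = ∫ ω, (g a * ∏ j ∈ s, g j) ω ∂ν := by
          congr 1; ext ω; simp [Finset.prod_apply]
      _ = (∫ ω, g a ω ∂ν) * ∫ ω, (∏ j ∈ s, g j) ω ∂ν := this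
      _ = (∫ ω, g a ω ∂ν) * ∏ j ∈ s, ∫ ω, g j ω ∂ν := by
          rw [← ih]; congr 1; apply integral_congr_ae; filter_upwards with ω
          simp [Finset.prod_apply]

lemma aux_ae_iIndepFun {Ω : Type*} (𝒢 : MeasurableSpace Ω) {mΩ : MeasurableSpace Ω}
    [StandardBorelSpace Ω] (μ : Measure Ω) [IsProbabilityMeasure μ] (h𝒢 : 𝒢 ≤ mΩ)
    {N : ℕ} {φ : Fin N → Ω → ℝ} (hmeas : ∀ i, Measurable (φ i))
    (hindep : iCondIndepFun 𝒢 h𝒢 (m := fun _ => Real.measurableSpace) φ μ) :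
    ∀ᵐ ω ∂μ, iIndepFun (m := fun _ => Real.measurableSpace) φ ((condExpKernel μ 𝒢) ω) := by
  classical
  have hk : Kernel.iIndepFun (m := fun _ => Real.measurableSpace) φ (condExpKernel μ 𝒢)
      (μ.trim h𝒢) := hindep
  have h1 : ∀ (S : Finset (Fin N)) (q : Fin N → ℚ), ∀ᵐ ω ∂(μ.trim h𝒢),
      condExpKernel μ 𝒢 ω (⋂ i ∈ S, φ i ⁻¹' Set.Iio ((q i : ℝ)))
        = ∏ i ∈ S, condExpKernel μ 𝒢 ω (φ i ⁻¹' Set.Iio ((q i : ℝ))) :=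
    fun S q => (Kernel.iIndepFun_iff_measure_inter_preimage_eq_mul _ _).1 hk S
      (sets := fun i => Set.Iio ((q i : ℝ))) (fun i _ => measurableSet_Iio)
  have h2 : ∀ᵐ ω ∂μ, ∀ (S : Finset (Fin N)) (q : Fin N → ℚ),
      condExpKernel μ 𝒢 ω (⋂ i ∈ S, φ i ⁻¹' Set.Iio ((q i : ℝ)))
        = ∏ i ∈ S, condExpKernel μ 𝒢 ω (φ i ⁻¹' Set.Iio ((q i : ℝ))) := by
    refine ae_of_ae_trim h𝒢 ?_
    rw [ae_all_iff]
    intro S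
    rw [ae_all_iff]
    exact h1 S
  filter_upwards [h2] with ω hω
  haveI : IsProbabilityMeasure ((condExpKernel μ 𝒢) ω) := inferInstance
  rw [iIndepFun_iff_iIndep]
  refine iIndepSets.iIndep (fun i => MeasurableSpace.comap_le_iff_le_map.2 ?_)
    (fun i => {s | ∃ q : ℚ, s = φ i ⁻¹' Set.Iio ((q : ℝ))}) ?_ ?_ ?_
  · exact fun s hs => (hmeas i) hs
  · -- IsPiSystem
    rintro i s ⟨q1, rfl⟩ t ⟨q2, rfl⟩ -
    exact ⟨min q1 q2, by simp [Set.Iio_inter_Iio, ← Set.preimage_inter, Rat.cast_min]⟩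
  · -- generateFrom
    intro i
    have : (Real.measurableSpace) = MeasurableSpace.generateFrom (⋃ a : ℚ, {Set.Iio (a : ℝ)}) :=
      Real.borel_eq_generateFrom_Iio_rat
    rw [this, MeasurableSpace.comap_generateFrom]
    congr 1
    ext s
    simp only [Set.mem_image, Set.mem_iUnion, Set.mem_singleton_iff, Set.mem_setOf_eq]
    constructor
    · rintro ⟨t, ⟨q, rfl⟩, rfl⟩; exact ⟨q, rfl⟩
    · rintro ⟨q, rfl⟩; exact ⟨Set.Iio (q : ℝ), ⟨q, rfl⟩, rfl⟩
  · -- iIndepSets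
    rw [iIndepSets_iff]
    intro S f hf
    choose q hq using fun (i : Fin N) (hi : i ∈ S) => hf i hi
    set q' : Fin N → ℚ := fun i => if hi : i ∈ S then q i hi else 0 with hq'
    have := hω S q'
    have hleft : (⋂ i ∈ S, f i) = ⋂ i ∈ S, φ i ⁻¹' Set.Iio ((q' i : ℝ)) := by
      apply Set.iInter₂_congr
      intro i hi
      rw [hq i hi, hq']
      simp [hi]
    have hright : ∀ i ∈ S, f i = φ i ⁻¹' Set.Iio ((q' i : ℝ)) := by
      intro i hi
      rw [hq i hi, hq']
      simp [hi]
    rw [hleft, this]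
    exact (Finset.prod_congr rfl fun i hi => by rw [hright i hi]).symm

lemma aux_condexp_prod {Ω : Type*} (𝒢 : MeasurableSpace Ω) {mΩ : MeasurableSpace Ω}
    [StandardBorelSpace Ω] (μ : Measure Ω) [IsProbabilityMeasure μ] (h𝒢 : 𝒢 ≤ mΩ)
    {N : ℕ} {φ : Fin N → Ω → ℝ} (hmeas : ∀ i, Measurable (φ i))
    (hbdd : ∀ i, ∃ C, ∀ ω, |φ i ω| ≤ C)
    (hindep : iCondIndepFun 𝒢 h𝒢 (m := fun _ => Real.measurableSpace) φ μ) :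
    μ[fun ω => ∏ i, φ i ω | 𝒢] =ᵐ[μ] fun ω => ∏ i, (μ[φ i | 𝒢]) ω := by
  classical
  choose C' hC' using hbdd
  set C : Fin N → ℝ := fun i => max (C' i) 0 with hCdef
  have hC : ∀ i ω, |φ i ω| ≤ C i := fun i ω => le_max_of_le_left (hC' i ω)
  have hC0 : ∀ i, 0 ≤ C i := fun i => le_max_right _ _
  have hint : ∀ i, Integrable (φ i) μ := by
    intro i
    exact (integrable_const (C i)).mono' (hmeas i).aestronglyMeasurable
      (Filter.Eventually.of_forall fun ω => by simpa using hC i ω)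
  have hintP : Integrable (fun ω => ∏ i, φ i ω) μ := by
    refine (integrable_const (∏ i, C i)).mono'
      (Finset.measurable_prod _ fun i _ => hmeas i).aestronglyMeasurable
      (Filter.Eventually.of_forall fun ω => ?_)
    rw [Real.norm_eq_abs, Finset.abs_prod]
    exact Finset.prod_le_prod (fun i _ => abs_nonneg _) (fun i _ => hC i ω)
  have h1 := condExp_ae_eq_integral_condExpKernel h𝒢 hintP
  have h2 : ∀ᵐ ω ∂μ, ∀ i, (μ[φ i | 𝒢]) ω = ∫ y, φ i y ∂((condExpKernel μ 𝒢) ω) := by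
    rw [ae_all_iff]
    exact fun i => condExp_ae_eq_integral_condExpKernel h𝒢 (hint i)
  have H := aux_ae_iIndepFun 𝒢 μ h𝒢 hmeas hindep
  filter_upwards [h1, h2, H] with ω h1ω h2ω Hω
  rw [h1ω]
  rw [aux_integral_prod_s16 hmeas Hω Finset.univ]
  exact Finset.prod_congr rfl fun i _ => (h2ω i).symm

lemma aux_main
    {Ω : Type*} (𝒢 : MeasurableSpace Ω) {mΩ : MeasurableSpace Ω} [StandardBorelSpace Ω]
    (μ : Measure Ω) [IsProbabilityMeasure μ]
    (h𝒢 : 𝒢 ≤ mΩ)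
    (N : ℕ) (φ : Fin N → Ω → ℝ)
    (hmeas : ∀ i, Measurable (φ i))
    (hbdd : ∀ i, ∃ C, ∀ ω, |φ i ω| ≤ C)
    (hindep : iCondIndepFun 𝒢 h𝒢 (m := fun _ => Real.measurableSpace) φ μ) :
    variance (fun ω => ∏ i, φ i ω) μ
      = variance (fun ω => ∏ i, (μ[φ i | 𝒢]) ω) μ
        + ∑ C ∈ Finset.univ.powerset.filter (fun C : Finset (Fin N) => C.Nonempty),
            ∫ ω, (∏ i ∈ C, ((μ[fun ω' => φ i ω' ^ 2 | 𝒢]) ω - ((μ[φ i | 𝒢]) ω) ^ 2))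
              * ∏ j ∈ Cᶜ, ((μ[φ j | 𝒢]) ω) ^ 2 ∂μ := by
  classical
  choose C' hC' using hbdd
  set C : Fin N → ℝ := fun i => max (C' i) 0 with hCdef
  have hC : ∀ i ω, |φ i ω| ≤ C i := fun i ω => le_max_of_le_left (hC' i ω)
  have hC0 : ∀ i, 0 ≤ C i := fun i => le_max_right _ _
  set m : Fin N → Ω → ℝ := fun i => μ[φ i | 𝒢] with hmdef
  set s : Fin N → Ω → ℝ := fun i => μ[fun ω' => φ i ω' ^ 2 | 𝒢] with hsdef
  -- measurability of condexps
  have hm_meas : ∀ i, StronglyMeasurable (m i) := fun i => stronglyMeasurable_condExp.mono h𝒢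
  have hs_meas : ∀ i, StronglyMeasurable (s i) := fun i => stronglyMeasurable_condExp.mono h𝒢
  -- boundedness
  have hm_bdd : ∀ i, ∀ᵐ ω ∂μ, |m i ω| ≤ C i := by
    intro i
    have := ae_bdd_condExp_of_ae_bdd (m := 𝒢) (μ := μ) (R := (C i).toNNReal)
      (f := φ i) (Filter.Eventually.of_forall fun ω => by
        rw [Real.coe_toNNReal _ (hC0 i)]; exact hC i ω)
    filter_upwards [this] with ω hω
    rwa [Real.coe_toNNReal _ (hC0 i)] at hω
  have hs_bdd : ∀ i, ∀ᵐ ω ∂μ, |s i ω| ≤ (C i) ^ 2 := by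
    intro i
    have := ae_bdd_condExp_of_ae_bdd (m := 𝒢) (μ := μ) (R := ((C i) ^ 2).toNNReal)
      (f := fun ω' => φ i ω' ^ 2) (Filter.Eventually.of_forall fun ω => by
        rw [Real.coe_toNNReal _ (sq_nonneg (C i)), abs_pow, sq_abs]
        rw [← sq_abs]
        exact pow_le_pow_left₀ (abs_nonneg _) (hC i ω) 2)
    filter_upwards [this] with ω hω
    rwa [Real.coe_toNNReal _ (sq_nonneg (C i))] at hω
  have hbddae : ∀ᵐ ω ∂μ, ∀ i, |m i ω| ≤ C i ∧ |s i ω| ≤ (C i) ^ 2 := by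
    rw [ae_all_iff]; exact fun i => (hm_bdd i).and (hs_bdd i)
  -- integrability of basic functions
  have hint : ∀ i, Integrable (φ i) μ := fun i =>
    (integrable_const (C i)).mono' (hmeas i).aestronglyMeasurable
      (Filter.Eventually.of_forall fun ω => by simpa using hC i ω)
  have hintsq : ∀ i, Integrable (fun ω => φ i ω ^ 2) μ := fun i =>
    (integrable_const ((C i) ^ 2)).mono' ((hmeas i).pow_const 2).aestronglyMeasurable
      (Filter.Eventually.of_forall fun ω => by
        rw [Real.norm_eq_abs, abs_pow, sq_abs, ← sq_abs]
        exact pow_le_pow_left₀ (abs_nonneg _) (hC i ω) 2)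
  have hintP : Integrable (fun ω => ∏ i, φ i ω) μ :=
    (integrable_const (∏ i, C i)).mono'
      (Finset.measurable_prod _ fun i _ => hmeas i).aestronglyMeasurable
      (Filter.Eventually.of_forall fun ω => by
        rw [Real.norm_eq_abs, Finset.abs_prod]
        exact Finset.prod_le_prod (fun i _ => abs_nonneg _) (fun i _ => hC i ω))
  have hintPsq : Integrable (fun ω => ∏ i, φ i ω ^ 2) μ :=
    (integrable_const (∏ i, (C i) ^ 2)).mono'
      (Finset.measurable_prod _ fun i _ => (hmeas i).pow_const 2).aestronglyMeasurable
      (Filter.Eventually.of_forall fun ω => by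
        rw [Real.norm_eq_abs, Finset.abs_prod]
        refine Finset.prod_le_prod (fun i _ => abs_nonneg _) (fun i _ => ?_)
        rw [abs_pow, sq_abs, ← sq_abs]
        exact pow_le_pow_left₀ (abs_nonneg _) (hC i ω) 2)
  -- memℒp 2
  have hP2 : MemLp (fun ω => ∏ i, φ i ω) 2 μ :=
    MemLp.of_bound (Finset.measurable_prod _ fun i _ => hmeas i).aestronglyMeasurable
      (∏ i, C i) (Filter.Eventually.of_forall fun ω => by
        rw [Real.norm_eq_abs, Finset.abs_prod]
        exact Finset.prod_le_prod (fun i _ => abs_nonneg _) (fun i _ => hC i ω))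
  have hM2 : MemLp (fun ω => ∏ i, m i ω) 2 μ :=
    MemLp.of_bound (Finset.stronglyMeasurable_fun_prod _ fun i _ => hm_meas i).aestronglyMeasurable
      (∏ i, C i) (by
        filter_upwards [hbddae] with ω hω
        rw [Real.norm_eq_abs, Finset.abs_prod]
        exact Finset.prod_le_prod (fun i _ => abs_nonneg _) (fun i _ => (hω i).1))
  -- conditional expectation identities
  have hcondP : μ[fun ω => ∏ i, φ i ω | 𝒢] =ᵐ[μ] fun ω => ∏ i, m i ω :=
    aux_condexp_prod 𝒢 μ h𝒢 hmeas (fun i => ⟨C i, hC i⟩) hindep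
  have hindep_sq : iCondIndepFun 𝒢 h𝒢 (m := fun _ => Real.measurableSpace)
      (fun i => fun ω => φ i ω ^ 2) μ := by
    have := Kernel.iIndepFun.comp hindep (fun _ => fun x : ℝ => x ^ 2)
      (fun _ => measurable_id.pow_const 2)
    exact this
  have hcondPsq : μ[fun ω => ∏ i, φ i ω ^ 2 | 𝒢] =ᵐ[μ] fun ω => ∏ i, s i ω :=
    aux_condexp_prod 𝒢 μ h𝒢 (fun i => (hmeas i).pow_const 2)
      (fun i => ⟨(C i) ^ 2, fun ω => by
        rw [abs_pow, sq_abs, ← sq_abs]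
        exact pow_le_pow_left₀ (abs_nonneg _) (hC i ω) 2⟩) hindep_sq
  -- first moment identity
  have hEP : ∫ ω, ∏ i, φ i ω ∂μ = ∫ ω, ∏ i, m i ω ∂μ := by
    rw [← integral_condExp (f := fun ω => ∏ i, φ i ω) h𝒢]
    exact integral_congr_ae hcondP
  have hEPsq : ∫ ω, ∏ i, φ i ω ^ 2 ∂μ = ∫ ω, ∏ i, s i ω ∂μ := by
    rw [← integral_condExp (f := fun ω => ∏ i, φ i ω ^ 2) h𝒢]
    exact integral_congr_ae hcondPsq
  -- integrability of the expansion terms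
  have hTerm_int : ∀ t : Finset (Fin N),
      Integrable (fun ω => (∏ i ∈ t, (s i ω - m i ω ^ 2)) * ∏ j ∈ tᶜ, m j ω ^ 2) μ := by
    intro t
    refine (integrable_const (∏ i, (2 * (C i) ^ 2))).mono' ?_ ?_
    · exact ((Finset.stronglyMeasurable_fun_prod t fun i _ =>
        (hs_meas i).sub ((hm_meas i).pow 2)).mul
        (Finset.stronglyMeasurable_fun_prod tᶜ fun j _ => (hm_meas j).pow 2)).aestronglyMeasurable
    · filter_upwards [hbddae] with ω hω
      rw [Real.norm_eq_abs, abs_mul, Finset.abs_prod, Finset.abs_prod]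
      have h1 : ∀ i ∈ t, |s i ω - m i ω ^ 2| ≤ 2 * (C i) ^ 2 := by
        intro i _
        refine (abs_sub _ _).trans ?_
        rw [abs_pow, sq_abs, two_mul]
        exact add_le_add (hω i).2 (by
          rw [← sq_abs]; exact pow_le_pow_left₀ (abs_nonneg _) (hω i).1 2)
      have h2 : ∀ j ∈ tᶜ, |m j ω ^ 2| ≤ 2 * (C j) ^ 2 := by
        intro j _
        rw [abs_pow]
        calc |m j ω| ^ 2 ≤ (C j) ^ 2 := by
              rw [← sq_abs (C j)]
              exact pow_le_pow_left₀ (abs_nonneg _) ((hω j).1.trans (le_abs_self _)) 2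
          _ ≤ 2 * (C j) ^ 2 := by nlinarith [sq_nonneg (C j)]
      calc (∏ i ∈ t, |s i ω - m i ω ^ 2|) * ∏ j ∈ tᶜ, |m j ω ^ 2|
          ≤ (∏ i ∈ t, (2 * (C i) ^ 2)) * ∏ j ∈ tᶜ, (2 * (C j) ^ 2) := by
            refine mul_le_mul (Finset.prod_le_prod (fun i _ => abs_nonneg _) h1)
              (Finset.prod_le_prod (fun j _ => abs_nonneg _) h2)
              (Finset.prod_nonneg fun j _ => abs_nonneg _)
              (Finset.prod_nonneg fun i _ => by positivity)
        _ = ∏ i, (2 * (C i) ^ 2) := Finset.prod_mul_prod_compl t _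
  -- the key expansion
  have key : ∫ ω, ∏ i, s i ω ∂μ
      = ∫ ω, (∏ i, m i ω) ^ 2 ∂μ
        + ∑ t ∈ Finset.univ.powerset.filter (fun t : Finset (Fin N) => t.Nonempty),
            ∫ ω, (∏ i ∈ t, (s i ω - m i ω ^ 2)) * ∏ j ∈ tᶜ, m j ω ^ 2 ∂μ := by
    have hptwise : ∀ ω, ∏ i, s i ω
        = ∑ t ∈ (Finset.univ : Finset (Fin N)).powerset,
            (∏ i ∈ t, (s i ω - m i ω ^ 2)) * ∏ j ∈ tᶜ, m j ω ^ 2 := by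
      intro ω
      have : ∀ i, s i ω = (s i ω - m i ω ^ 2) + m i ω ^ 2 := fun i => by ring
      calc ∏ i, s i ω = ∏ i, ((s i ω - m i ω ^ 2) + m i ω ^ 2) := by
            exact Finset.prod_congr rfl fun i _ => this i
        _ = ∑ t ∈ (Finset.univ : Finset (Fin N)).powerset,
              (∏ i ∈ t, (s i ω - m i ω ^ 2)) * ∏ j ∈ Finset.univ \ t, m j ω ^ 2 :=
            Finset.prod_add _ _ _
        _ = _ := by
            refine Finset.sum_congr rfl fun t _ => ?_
            rw [Finset.compl_eq_univ_sdiff]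
    have hsum : ∫ ω, ∏ i, s i ω ∂μ
        = ∑ t ∈ (Finset.univ : Finset (Fin N)).powerset,
            ∫ ω, (∏ i ∈ t, (s i ω - m i ω ^ 2)) * ∏ j ∈ tᶜ, m j ω ^ 2 ∂μ := by
      rw [show (fun ω => ∏ i, s i ω)
          = fun ω => ∑ t ∈ (Finset.univ : Finset (Fin N)).powerset,
              (∏ i ∈ t, (s i ω - m i ω ^ 2)) * ∏ j ∈ tᶜ, m j ω ^ 2 from funext hptwise]
      exact integral_finset_sum _ fun t _ => hTerm_int t
    rw [hsum]
    rw [← Finset.sum_filter_add_sum_filter_not (Finset.univ.powerset)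
      (fun t : Finset (Fin N) => t.Nonempty)]
    have hempty : (Finset.univ.powerset.filter
        (fun t : Finset (Fin N) => ¬ t.Nonempty)) = {∅} := by
      ext t
      simp [Finset.not_nonempty_iff_eq_empty]
    rw [hempty, Finset.sum_singleton, add_comm]
    congr 1
    simp only [Finset.prod_empty, Finset.compl_empty, one_mul]
    congr 1
    ext ω
    rw [← Finset.prod_pow]
  -- put things together
  rw [variance_eq_sub hP2, variance_eq_sub hM2]
  have e1 : (μ[(fun ω => ∏ i, φ i ω) ^ 2]) = ∫ ω, ∏ i, φ i ω ^ 2 ∂μ := by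
    apply integral_congr_ae
    filter_upwards with ω
    simp [Finset.prod_pow]
  have e2 : (μ[(fun ω => ∏ i, m i ω) ^ 2]) = ∫ ω, (∏ i, m i ω) ^ 2 ∂μ := by
    apply integral_congr_ae
    filter_upwards with ω
    simp
  rw [e1, e2, hEPsq, key]
  have e3 : (μ[fun ω => ∏ i, φ i ω]) = (μ[fun ω => ∏ i, m i ω]) := hEP
  rw [e3]
  ring

/-- For bounded real random variables `φ₁,…,φ_N` that are mutually
conditionally independent given `𝒢`, the unconditional variance of the product decomposes
as `Var(∏ᵢ φᵢ) = Var(∏ᵢ E[φᵢ|𝒢]) + Σ_{∅ ≠ C} E[∏_{i∈C} Var(φᵢ|𝒢) ∏_{j∉C} E[φⱼ|𝒢]²]`;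
in particular the joint Monte Carlo estimator built from `R` i.i.d. copies of the vector
`(φ₁,…,φ_N)` has variance equal to `1/R` times this quantity. -/
theorem variance_prod_of_iCondIndepFun
    {Ω : Type*} (𝒢 : MeasurableSpace Ω) {mΩ : MeasurableSpace Ω} [StandardBorelSpace Ω]
    (μ : Measure Ω) [IsProbabilityMeasure μ]
    (h𝒢 : 𝒢 ≤ mΩ)
    (N : ℕ) (φ : Fin N → Ω → ℝ)
    (hmeas : ∀ i, Measurable (φ i))
    (hbdd : ∀ i, ∃ C, ∀ ω, |φ i ω| ≤ C)
    (hindep : iCondIndepFun 𝒢 h𝒢 (m := fun _ => Real.measurableSpace) φ μ)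
    (R : ℕ) (hR : 1 ≤ R)
    (Φ : Fin R → Ω → (Fin N → ℝ))
    (hΦmeas : ∀ r, Measurable (Φ r))
    (hΦindep : iIndepFun (m := fun _ => (inferInstance : MeasurableSpace (Fin N → ℝ))) Φ μ)
    (hΦdist : ∀ r, IdentDistrib (Φ r) (fun ω i => φ i ω) μ μ) :
    variance (fun ω => ∏ i, φ i ω) μ
      = variance (fun ω => ∏ i, (μ[φ i | 𝒢]) ω) μ
        + ∑ C ∈ Finset.univ.powerset.filter (fun C : Finset (Fin N) => C.Nonempty),
            ∫ ω, (∏ i ∈ C, ((μ[fun ω' => φ i ω' ^ 2 | 𝒢]) ω - ((μ[φ i | 𝒢]) ω) ^ 2))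
              * ∏ j ∈ Cᶜ, ((μ[φ j | 𝒢]) ω) ^ 2 ∂μ
    ∧ variance (fun ω => (R : ℝ)⁻¹ * ∑ r, ∏ i, Φ r ω i) μ
      = (R : ℝ)⁻¹ *
        (variance (fun ω => ∏ i, (μ[φ i | 𝒢]) ω) μ
          + ∑ C ∈ Finset.univ.powerset.filter (fun C : Finset (Fin N) => C.Nonempty),
              ∫ ω, (∏ i ∈ C, ((μ[fun ω' => φ i ω' ^ 2 | 𝒢]) ω - ((μ[φ i | 𝒢]) ω) ^ 2))
                * ∏ j ∈ Cᶜ, ((μ[φ j | 𝒢]) ω) ^ 2 ∂μ) := by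
  have key := aux_main 𝒢 μ h𝒢 N φ hmeas hbdd hindep
  refine ⟨key, ?_⟩
  -- Monte Carlo part
  choose C' hC' using hbdd
  have hC : ∀ i ω, |φ i ω| ≤ max (C' i) 0 := fun i ω => le_max_of_le_left (hC' i ω)
  have hP2 : MemLp (fun ω => ∏ i, φ i ω) 2 μ :=
    MemLp.of_bound (Finset.measurable_prod _ fun i _ => hmeas i).aestronglyMeasurable
      (∏ i, max (C' i) 0) (Filter.Eventually.of_forall fun ω => by
        rw [Real.norm_eq_abs, Finset.abs_prod]
        exact Finset.prod_le_prod (fun i _ => abs_nonneg _) (fun i _ => hC i ω))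
  have hg : Measurable (fun v : Fin N → ℝ => ∏ i, v i) :=
    Finset.measurable_prod _ fun i _ => measurable_pi_apply i
  have hXindep : iIndepFun (m := fun _ => Real.measurableSpace)
      (fun r (ω : Ω) => ∏ i, Φ r ω i) μ :=
    hΦindep.comp (fun _ => fun v => ∏ i, v i) (fun _ => hg)
  have hXid : ∀ r, IdentDistrib (fun ω => ∏ i, Φ r ω i) (fun ω => ∏ i, φ i ω) μ μ :=
    fun r => (hΦdist r).comp hg
  have hX2 : ∀ r, MemLp (fun ω => ∏ i, Φ r ω i) 2 μ :=
    fun r => (hXid r).symm.memLp_snd hP2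
  have hsumfun : (fun ω => ∑ r, ∏ i, Φ r ω i)
      = ∑ r, (fun ω => ∏ i, Φ r ω i) := by
    ext ω; simp
  have hvarsum : variance (fun ω => ∑ r, ∏ i, Φ r ω i) μ
      = (R : ℝ) * variance (fun ω => ∏ i, φ i ω) μ := by
    rw [hsumfun, IndepFun.variance_sum (fun r _ => hX2 r)
      (fun a _ b _ hab => hXindep.indepFun hab)]
    rw [Finset.sum_congr rfl (fun r _ => (hXid r).variance_eq)]
    simp [Finset.card_univ, mul_comm]
  have hR0 : (R : ℝ) ≠ 0 := by
    have : 0 < R := hR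
    positivity
  calc variance (fun ω => (R : ℝ)⁻¹ * ∑ r, ∏ i, Φ r ω i) μ
      = ((R : ℝ)⁻¹) ^ 2 * variance (fun ω => ∑ r, ∏ i, Φ r ω i) μ :=
        variance_const_mul _ _ _
    _ = ((R : ℝ)⁻¹) ^ 2 * ((R : ℝ) * variance (fun ω => ∏ i, φ i ω) μ) := by rw [hvarsum]
    _ = (R : ℝ)⁻¹ * variance (fun ω => ∏ i, φ i ω) μ := by
        field_simp
    _ = _ := by rw [key]
end

section
/- Let Y₁,…,Y_N (N ≥ 3) be bounded real random variables with total covariation TCI(Y) = E(∏_{i=1}^N Yᵢ) − ∏_{i=1}^N E(Yᵢ). Then |TCI(Y)| ≤ Σ_{k=0}^{N−2} [ ( ∏_{i=N+1−k}^{N} |E(Yᵢ)| ) · √( Var( ∏_{i=1}^{N−k−1} Yᵢ ) · Var( Y_{N−k} ) ) ], where a product over an empty index range (the k = 0 term) equals 1. -/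
open MeasureTheory ProbabilityTheory Finset

private lemma cs_int {Ω : Type*} [MeasurableSpace Ω] (μ : Measure Ω) [IsProbabilityMeasure μ]
    {f g : Ω → ℝ} (hf : MemLp f 2 μ) (hg : MemLp g 2 μ) :
    |∫ ω, f ω * g ω ∂μ| ≤ Real.sqrt (∫ ω, f ω ^ 2 ∂μ) * Real.sqrt (∫ ω, g ω ^ 2 ∂μ) := by
  have hpq : (2 : ℝ).HolderConjugate 2 := ⟨by norm_num, by norm_num, by norm_num⟩
  have e2 : ENNReal.ofReal (2 : ℝ) = 2 := by
    rw [ENNReal.ofReal_ofNat]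
  have hf' : MemLp (fun ω => |f ω|) (ENNReal.ofReal (2 : ℝ)) μ := by
    rw [e2]; simpa [Real.norm_eq_abs] using hf.norm
  have hg' : MemLp (fun ω => |g ω|) (ENNReal.ofReal (2 : ℝ)) μ := by
    rw [e2]; simpa [Real.norm_eq_abs] using hg.norm
  have h2 := integral_mul_le_Lp_mul_Lq_of_nonneg (μ := μ) hpq
    (Filter.Eventually.of_forall fun ω => abs_nonneg (f ω))
    (Filter.Eventually.of_forall fun ω => abs_nonneg (g ω)) hf' hg'
  have h0 : |∫ ω, f ω * g ω ∂μ| ≤ ∫ ω, |f ω| * |g ω| ∂μ := by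
    simpa [Real.norm_eq_abs, abs_mul] using
      norm_integral_le_integral_norm (μ := μ) (fun ω => f ω * g ω)
  have hfsq : (∫ ω, |f ω| ^ (2 : ℝ) ∂μ) = ∫ ω, f ω ^ 2 ∂μ := by
    refine integral_congr_ae (Filter.Eventually.of_forall fun ω => ?_)
    show |f ω| ^ (2 : ℝ) = f ω ^ 2
    rw [Real.rpow_two, sq_abs]
  have hgsq : (∫ ω, |g ω| ^ (2 : ℝ) ∂μ) = ∫ ω, g ω ^ 2 ∂μ := by
    refine integral_congr_ae (Filter.Eventually.of_forall fun ω => ?_)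
    show |g ω| ^ (2 : ℝ) = g ω ^ 2
    rw [Real.rpow_two, sq_abs]
  rw [hfsq, hgsq] at h2
  calc |∫ ω, f ω * g ω ∂μ| ≤ ∫ ω, |f ω| * |g ω| ∂μ := h0
    _ ≤ (∫ ω, f ω ^ 2 ∂μ) ^ (1 / (2:ℝ)) * (∫ ω, g ω ^ 2 ∂μ) ^ (1 / (2:ℝ)) := h2
    _ = Real.sqrt (∫ ω, f ω ^ 2 ∂μ) * Real.sqrt (∫ ω, g ω ^ 2 ∂μ) := by
        rw [Real.sqrt_eq_rpow, Real.sqrt_eq_rpow]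

private lemma cov_bound {Ω : Type*} [MeasurableSpace Ω] (μ : Measure Ω) [IsProbabilityMeasure μ]
    {X Z : Ω → ℝ} (hXm : Measurable X) (hZm : Measurable Z)
    (hXb : ∃ C, ∀ ω, |X ω| ≤ C) (hZb : ∃ C, ∀ ω, |Z ω| ≤ C) :
    |(∫ ω, X ω * Z ω ∂μ) - (∫ ω, X ω ∂μ) * (∫ ω, Z ω ∂μ)|
      ≤ Real.sqrt (variance X μ * variance Z μ) := by
  obtain ⟨C, hC⟩ := hXb
  obtain ⟨D, hD⟩ := hZb
  have hX2 : MemLp X 2 μ :=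
    (memLp_top_of_bound hXm.aestronglyMeasurable C
      (Filter.Eventually.of_forall fun ω => by simpa [Real.norm_eq_abs] using hC ω)
      ).mono_exponent le_top
  have hZ2 : MemLp Z 2 μ :=
    (memLp_top_of_bound hZm.aestronglyMeasurable D
      (Filter.Eventually.of_forall fun ω => by simpa [Real.norm_eq_abs] using hD ω)
      ).mono_exponent le_top
  have hXi : Integrable X μ := hX2.integrable one_le_two
  have hZi : Integrable Z μ := hZ2.integrable one_le_two
  set a := ∫ ω, X ω ∂μ with ha
  set b := ∫ ω, Z ω ∂μ with hb
  have hXZ : Integrable (fun ω => X ω * Z ω) μ :=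
    hZi.bdd_mul hXm.aestronglyMeasurable (c := C) (Filter.Eventually.of_forall fun ω => by simpa [Real.norm_eq_abs] using hC ω)
  have key : (∫ ω, (X ω - a) * (Z ω - b) ∂μ) = (∫ ω, X ω * Z ω ∂μ) - a * b := by
    have : ∀ ω, (X ω - a) * (Z ω - b) = X ω * Z ω - a * Z ω - b * X ω + a * b := by
      intro ω; ring
    have I1 : Integrable (fun ω => X ω * Z ω - a * Z ω) μ := hXZ.sub (hZi.const_mul a)
    have I2 : Integrable (fun ω => X ω * Z ω - a * Z ω - b * X ω) μ := I1.sub (hXi.const_mul b)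
    simp_rw [this]
    rw [integral_add I2 (integrable_const _), integral_sub I1 (hXi.const_mul b),
      integral_sub hXZ (hZi.const_mul a), integral_const_mul, integral_const_mul,
      integral_const]
    simp only [measure_univ, probReal_univ, ENNReal.toReal_one, smul_eq_mul, one_mul]
    ring
  have hXa : MemLp (fun ω => X ω - a) 2 μ := hX2.sub (memLp_const a)
  have hZb2 : MemLp (fun ω => Z ω - b) 2 μ := hZ2.sub (memLp_const b)
  have hcs := cs_int μ hXa hZb2
  rw [key] at hcs
  have hvX : variance X μ = ∫ ω, (X ω - a) ^ 2 ∂μ := by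
    rw [variance_eq_integral hXm.aemeasurable]
  have hvZ : variance Z μ = ∫ ω, (Z ω - b) ^ 2 ∂μ := by
    rw [variance_eq_integral hZm.aemeasurable]
  rw [hvX, hvZ, Real.sqrt_mul (integral_nonneg fun ω => sq_nonneg _)]
  exact hcs

/-- For bounded real random variables `Y₁,…,Y_N` (`N ≥ 3`), the total
covariation `TCI(Y) = E(∏ᵢ Yᵢ) − ∏ᵢ E(Yᵢ)` satisfies the Cauchy–Schwarz bound
`|TCI(Y)| ≤ Σ_{k=0}^{N−2} (∏_{i=N+1−k}^N |E(Yᵢ)|) √(Var(∏_{i=1}^{N−k−1} Yᵢ) Var(Y_{N−k}))`. -/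
theorem total_covariation_upper_bound
    {Ω : Type*} [MeasurableSpace Ω] (μ : Measure Ω) [IsProbabilityMeasure μ]
    (N : ℕ) (hN : 3 ≤ N) (Y : ℕ → Ω → ℝ)
    (hmeas : ∀ i ∈ Finset.Icc 1 N, Measurable (Y i))
    (hbdd : ∀ i ∈ Finset.Icc 1 N, ∃ C, ∀ ω, |Y i ω| ≤ C) :
    |(∫ ω, ∏ i ∈ Finset.Icc 1 N, Y i ω ∂μ) - ∏ i ∈ Finset.Icc 1 N, ∫ ω, Y i ω ∂μ|
      ≤ ∑ k ∈ Finset.range (N - 1),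
          (∏ i ∈ Finset.Icc (N + 1 - k) N, |∫ ω, Y i ω ∂μ|) *
            Real.sqrt (variance (fun ω => ∏ i ∈ Finset.Icc 1 (N - k - 1), Y i ω) μ
              * variance (Y (N - k)) μ) := by
  set m : ℕ → ℝ := fun i => ∫ ω, Y i ω ∂μ with hm
  set P : ℕ → Ω → ℝ := fun j ω => ∏ i ∈ Finset.Icc 1 j, Y i ω with hP
  -- measurability and boundedness of partial products
  have hPm : ∀ j, j ≤ N → Measurable (P j) := by
    intro j hj
    exact Finset.measurable_prod _ fun i hi =>
      hmeas i (Finset.mem_Icc.mpr ⟨(Finset.mem_Icc.mp hi).1, le_trans (Finset.mem_Icc.mp hi).2 hj⟩)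
  have hPb : ∀ j, j ≤ N → ∃ C, ∀ ω, |P j ω| ≤ C := by
    intro j hj
    classical
    choose! C hC using hbdd
    refine ⟨∏ i ∈ Finset.Icc 1 j, max (C i) 0, fun ω => ?_⟩
    rw [hP]
    simp only []
    rw [Finset.abs_prod]
    refine Finset.prod_le_prod (fun i _ => abs_nonneg _) fun i hi => ?_
    have hiN : i ∈ Finset.Icc 1 N := Finset.mem_Icc.mpr
      ⟨(Finset.mem_Icc.mp hi).1, le_trans (Finset.mem_Icc.mp hi).2 hj⟩
    exact le_trans (hC i hiN ω) (le_max_left _ _)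
  -- telescoping function
  set g : ℕ → ℝ := fun k => (∏ i ∈ Finset.Icc (N + 1 - k) N, m i) * ∫ ω, P (N - k) ω ∂μ with hg
  have hg0 : g 0 = ∫ ω, P N ω ∂μ := by
    simp [hg, Finset.Icc_eq_empty_of_lt (Nat.lt_succ_self N)]
  have hglast : g (N - 1) = ∏ i ∈ Finset.Icc 1 N, m i := by
    have h1 : N + 1 - (N - 1) = 2 := by omega
    have h2 : N - (N - 1) = 1 := by omega
    have h3 : (Finset.Icc 1 N : Finset ℕ) = insert 1 (Finset.Icc 2 N) := by
      ext x; simp only [Finset.mem_Icc, Finset.mem_insert]; omega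
    have h4 : (1 : ℕ) ∉ Finset.Icc 2 N := by simp
    have h5 : ∫ ω, P 1 ω ∂μ = m 1 := by
      simp [hP, hm, Finset.Icc_self]
    rw [hg]
    simp only [h1, h2, h5]
    rw [h3, Finset.prod_insert h4]
    ring
  have tele : (∫ ω, P N ω ∂μ) - ∏ i ∈ Finset.Icc 1 N, m i
      = ∑ k ∈ Finset.range (N - 1), (g k - g (k + 1)) := by
    rw [Finset.sum_range_sub' g (N - 1), hg0, hglast]
  -- bound each telescoping term
  have hterm : ∀ k ∈ Finset.range (N - 1), |g k - g (k + 1)|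
      ≤ (∏ i ∈ Finset.Icc (N + 1 - k) N, |m i|) *
          Real.sqrt (variance (P (N - k - 1)) μ * variance (Y (N - k)) μ) := by
    intro k hk
    have hkN : k < N - 1 := Finset.mem_range.mp hk
    have hNk2 : 2 ≤ N - k := by omega
    have hsucc : N - k = (N - k - 1) + 1 := by omega
    have hNk1 : N - (k + 1) = N - k - 1 := by omega
    have hNk1' : N + 1 - (k + 1) = N - k := by omega
    have hins : (Finset.Icc (N - k) N : Finset ℕ) = insert (N - k) (Finset.Icc (N + 1 - k) N) := by
      ext x; simp only [Finset.mem_Icc, Finset.mem_insert]; omega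
    have hnotin : (N - k) ∉ Finset.Icc (N + 1 - k) N := by
      simp only [Finset.mem_Icc]; omega
    have hgk1 : g (k + 1)
        = m (N - k) * ((∏ i ∈ Finset.Icc (N + 1 - k) N, m i) * ∫ ω, P (N - k - 1) ω ∂μ) := by
      rw [hg]
      simp only [hNk1, hNk1']
      rw [hins, Finset.prod_insert hnotin]
      ring
    -- ∫ P (N-k) = ∫ (P (N-k-1)) * Y (N-k)
    have hsplit : ∀ ω, P (N - k) ω = P (N - k - 1) ω * Y (N - k) ω := by
      intro ω
      rw [hP]
      simp only []
      rw [hsucc, Finset.prod_Icc_succ_top (by omega : 1 ≤ (N - k - 1) + 1),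
        Nat.add_sub_cancel]
    have hdiff : g k - g (k + 1)
        = (∏ i ∈ Finset.Icc (N + 1 - k) N, m i) *
            ((∫ ω, P (N - k - 1) ω * Y (N - k) ω ∂μ)
              - (∫ ω, P (N - k - 1) ω ∂μ) * m (N - k)) := by
      rw [hgk1, hg]
      simp only []
      rw [integral_congr_ae (Filter.Eventually.of_forall hsplit)]
      ring
    have hNkmem : (N - k) ∈ Finset.Icc 1 N := Finset.mem_Icc.mpr ⟨by omega, by omega⟩
    have hcov := cov_bound μ (hPm (N - k - 1) (by omega)) (hmeas (N - k) hNkmem)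
      (hPb (N - k - 1) (by omega)) (hbdd (N - k) hNkmem)
    rw [hdiff, abs_mul, Finset.abs_prod]
    exact mul_le_mul_of_nonneg_left hcov (Finset.prod_nonneg fun i _ => abs_nonneg _)
  calc |(∫ ω, ∏ i ∈ Finset.Icc 1 N, Y i ω ∂μ) - ∏ i ∈ Finset.Icc 1 N, ∫ ω, Y i ω ∂μ|
      = |∑ k ∈ Finset.range (N - 1), (g k - g (k + 1))| := by rw [← tele]
    _ ≤ ∑ k ∈ Finset.range (N - 1), |g k - g (k + 1)| := Finset.abs_sum_le_sum_abs _ _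
    _ ≤ _ := Finset.sum_le_sum hterm
end
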